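/- arXiv:1412.7558 — 11 statements merged into one kernel-verified Lean document; each statement's English description precedes it below -/
import Mathlib

section
/- Let U be a finite set and let F ⊆ 2^U be a family of subsets such that for all X₁, X₂ ∈ F, if there exist x₁ ∈ X₁ \ X₂ and x₂ ∈ X₂ \ X₁, then no member Y ∈ F contains both x₁ and x₂. Then |F| ≤ |U| + 1. -/
section TPaux
variable {U : Type*} [DecidableEq U]

private def TPfam (F : Finset (Finset U)) : Prop :=
  ∀ X₁ ∈ F, ∀ X₂ ∈ F, ∀ x₁ ∈ X₁ \ X₂, ∀ x₂ ∈ X₂ \ X₁, ∀ Y ∈ F, ¬(x₁ ∈ Y ∧ x₂ ∈ Y)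

private lemma tp_mono {F G : Finset (Finset U)} (h : G ⊆ F) (hTP : TPfam F) : TPfam G :=
  fun X₁ h1 X₂ h2 x₁ hx₁ x₂ hx₂ Y hY => hTP X₁ (h h1) X₂ (h h2) x₁ hx₁ x₂ hx₂ Y (h hY)

private lemma tp_key {F : Finset (Finset U)} (hTP : TPfam F) {a : U} {Y B : Finset U}
    (hY : Y ∈ F) (haY : a ∉ Y) (_haB : a ∉ B)
    (hXY : insert a Y ∈ F) (hAB : insert a B ∈ F) : Y ⊆ B := by
  intro y hy
  by_contra hyB
  have hyne : y ≠ a := fun h => haY (h ▸ hy)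
  have h := hTP (insert a B) hAB Y hY a
    (Finset.mem_sdiff.mpr ⟨Finset.mem_insert_self _ _, haY⟩) y
    (Finset.mem_sdiff.mpr ⟨hy, by simp [hyne, hyB]⟩) (insert a Y) hXY
  exact h ⟨Finset.mem_insert_self _ _, Finset.mem_insert_of_mem hy⟩

private lemma tp_image {F : Finset (Finset U)} (hTP : TPfam F) (a : U) :
    TPfam (F.image (·.erase a)) := by
  intro X₁' h1 X₂' h2 x₁ hx₁ x₂ hx₂ Y' hY' hmem
  obtain ⟨X₁, hX₁, rfl⟩ := Finset.mem_image.mp h1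
  obtain ⟨X₂, hX₂, rfl⟩ := Finset.mem_image.mp h2
  obtain ⟨Y, hY, rfl⟩ := Finset.mem_image.mp hY'
  simp only [Finset.mem_sdiff, Finset.mem_erase] at hx₁ hx₂
  exact hTP X₁ hX₁ X₂ hX₂ x₁ (Finset.mem_sdiff.mpr ⟨hx₁.1.2, fun h => hx₁.2 ⟨hx₁.1.1, h⟩⟩)
    x₂ (Finset.mem_sdiff.mpr ⟨hx₂.1.2, fun h => hx₂.2 ⟨hx₂.1.1, h⟩⟩) Y hY
    ⟨Finset.mem_of_mem_erase hmem.1, Finset.mem_of_mem_erase hmem.2⟩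

private lemma tp_pair {a : U} {X Y : Finset U} (hne : X ≠ Y)
    (heq : X.erase a = Y.erase a) :
    (a ∉ Y ∧ X = insert a Y) ∨ (a ∉ X ∧ Y = insert a X) := by
  by_cases haX : a ∈ X <;> by_cases haY : a ∈ Y
  · exact absurd (by rw [← Finset.insert_erase haX, heq, Finset.insert_erase haY]) hne
  · left
    refine ⟨haY, ?_⟩
    rw [← Finset.insert_erase haX, heq, Finset.erase_eq_of_notMem haY]
  · right
    refine ⟨haX, ?_⟩
    rw [← Finset.insert_erase haY, ← heq, Finset.erase_eq_of_notMem haX]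
  · exact absurd
      (by rw [← Finset.erase_eq_of_notMem haX, heq, Finset.erase_eq_of_notMem haY]) hne

private lemma tp_inj {F : Finset (Finset U)} (hTP : TPfam F) {a : U} {Z : Finset U}
    (hZ : Z ∈ F) (haZ : a ∉ Z) (hX : insert a Z ∈ F) :
    Set.InjOn (fun W : Finset U => W.erase a) ↑(F.erase (insert a Z)) := by
  intro A hA B hB hAB
  by_contra hABne
  simp only [Finset.coe_erase, Set.mem_diff, Finset.mem_coe, Set.mem_singleton_iff]
    at hA hB
  obtain ⟨haB, rfl⟩ | ⟨haA, rfl⟩ := tp_pair hABne hAB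
  · exact hA.2 (by rw [Finset.Subset.antisymm (tp_key hTP hB.1 haB haZ hA.1 hX)
      (tp_key hTP hZ haZ haB hX hA.1)])
  · exact hB.2 (by rw [Finset.Subset.antisymm (tp_key hTP hA.1 haA haZ hB.1 hX)
      (tp_key hTP hZ haZ haA hX hB.1)])

private lemma tp_aux (S : Finset U) : ∀ F : Finset (Finset U), TPfam F →
    (∀ X ∈ F, X ⊆ S) → F.card ≤ S.card + 1 := by
  induction S using Finset.induction_on with
  | empty =>
    intro F _ hsub
    have : F ⊆ {∅} := fun X hX => by
      simp [Finset.subset_empty.mp (hsub X hX)]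
    calc F.card ≤ ({∅} : Finset (Finset U)).card := Finset.card_le_card this
      _ ≤ _ := by simp
  | @insert a s ha ih =>
    intro F hTP hsub
    have hsub' : ∀ G : Finset (Finset U), G ⊆ F →
        ∀ X ∈ G.image (·.erase a), X ⊆ s := by
      intro G hG X hX
      obtain ⟨W, hW, rfl⟩ := Finset.mem_image.mp hX
      have : W.erase a ⊆ (insert a s).erase a :=
        Finset.erase_subset_erase a (hsub W (hG hW))
      rwa [Finset.erase_insert ha] at this
    by_cases hinj : Set.InjOn (fun W : Finset U => W.erase a) ↑F
    · calc F.card = (F.image (·.erase a)).card := (Finset.card_image_of_injOn hinj).symm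
        _ ≤ s.card + 1 := ih _ (tp_image hTP a) (hsub' F Finset.Subset.rfl)
        _ ≤ (insert a s).card + 1 := by
            have := Finset.card_insert_of_notMem ha; omega
    · simp only [Set.InjOn, not_forall] at hinj
      obtain ⟨X, hX, Y, hY, heq, hne⟩ := hinj
      simp only [Finset.mem_coe] at hX hY
      obtain ⟨Z, hZF, haZ, hZi⟩ : ∃ Z, Z ∈ F ∧ a ∉ Z ∧ insert a Z ∈ F := by
        obtain ⟨haY', h⟩ | ⟨haX', h⟩ := tp_pair hne heq
        exacts [⟨Y, hY, haY', h ▸ hX⟩, ⟨X, hX, haX', h ▸ hY⟩]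
      have h1 : (F.erase (insert a Z)).card + 1 = F.card :=
        Finset.card_erase_add_one hZi
      have h2 : (F.erase (insert a Z)).card
          = ((F.erase (insert a Z)).image (·.erase a)).card :=
        (Finset.card_image_of_injOn (tp_inj hTP hZF haZ hZi)).symm
      have h3 := ih ((F.erase (insert a Z)).image (·.erase a))
        (tp_image (tp_mono (Finset.erase_subset _ _) hTP) a)
        (hsub' _ (Finset.erase_subset _ _))
      have h4 := Finset.card_insert_of_notMem ha
      omega

end TPaux

/-- A TP-set system `F` over a finite ground set `U` has
cardinality at most `|U| + 1`. -/
theorem tp_set_system_card_le {U : Type*} [Fintype U] [DecidableEq U]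
    (F : Finset (Finset U))
    (hTP : ∀ X₁ ∈ F, ∀ X₂ ∈ F, ∀ x₁ ∈ X₁ \ X₂, ∀ x₂ ∈ X₂ \ X₁,
      ∀ Y ∈ F, ¬(x₁ ∈ Y ∧ x₂ ∈ Y)) :
    F.card ≤ Fintype.card U + 1 := by
  have := tp_aux (Finset.univ : Finset U) F hTP (fun X _ => Finset.subset_univ X)
  simpa [Finset.card_univ] using this
end

section
/- Let F be a TP-set system over a finite ground set U, and let X ∈ F be a nonempty member of minimum cardinality among all nonempty members of F. Then for any two nonempty members Y₁, Y₂ ∈ F, if Y₁ \ X = Y₂ \ X then Y₁ = Y₂. -/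
/-- In a TP-set system, if `X` is a nonempty member of minimum
cardinality among nonempty members, then nonempty members are determined by
their difference with `X`. -/
theorem tp_set_system_min_member_determines {U : Type*} [Fintype U] [DecidableEq U]
    (F : Finset (Finset U))
    (hTP : ∀ X₁ ∈ F, ∀ X₂ ∈ F, ∀ x₁ ∈ X₁ \ X₂, ∀ x₂ ∈ X₂ \ X₁,
      ∀ Y ∈ F, ¬(x₁ ∈ Y ∧ x₂ ∈ Y))
    (X : Finset U) (hXF : X ∈ F) (hXne : X.Nonempty)
    (hmin : ∀ Z ∈ F, Z.Nonempty → X.card ≤ Z.card)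
    (Y₁ Y₂ : Finset U) (hY₁ : Y₁ ∈ F) (hY₂ : Y₂ ∈ F)
    (hY₁ne : Y₁.Nonempty) (hY₂ne : Y₂.Nonempty)
    (hdiff : Y₁ \ X = Y₂ \ X) :
    Y₁ = Y₂ := by
  by_cases hD : (Y₁ \ X).Nonempty
  · obtain ⟨d, hd1⟩ := hD
    have hd2 : d ∈ Y₂ \ X := hdiff ▸ hd1
    ext a
    constructor
    · intro ha
      by_cases haX : a ∈ X
      · by_contra haY₂
        exact hTP Y₂ hY₂ X hXF d hd2 a (Finset.mem_sdiff.mpr ⟨haX, haY₂⟩) Y₁ hY₁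
          ⟨(Finset.mem_sdiff.mp hd1).1, ha⟩
      · have : a ∈ Y₂ \ X := hdiff ▸ Finset.mem_sdiff.mpr ⟨ha, haX⟩
        exact (Finset.mem_sdiff.mp this).1
    · intro ha
      by_cases haX : a ∈ X
      · by_contra haY₁
        exact hTP Y₁ hY₁ X hXF d hd1 a (Finset.mem_sdiff.mpr ⟨haX, haY₁⟩) Y₂ hY₂
          ⟨(Finset.mem_sdiff.mp hd2).1, ha⟩
      · have : a ∈ Y₁ \ X := hdiff ▸ Finset.mem_sdiff.mpr ⟨ha, haX⟩
        exact (Finset.mem_sdiff.mp this).1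
  · have h1 : Y₁ ⊆ X := by
      intro a ha
      by_contra haX
      exact hD ⟨a, Finset.mem_sdiff.mpr ⟨ha, haX⟩⟩
    have h2 : Y₂ ⊆ X := by
      intro a ha
      by_contra haX
      have : a ∈ Y₁ \ X := hdiff ▸ Finset.mem_sdiff.mpr ⟨ha, haX⟩
      exact hD ⟨a, this⟩
    have e1 : Y₁ = X := Finset.eq_of_subset_of_card_le h1 (hmin Y₁ hY₁ hY₁ne)
    have e2 : Y₂ = X := Finset.eq_of_subset_of_card_le h2 (hmin Y₂ hY₂ hY₂ne)
    rw [e1, e2]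
end

section
/- Let G be a graph containing a true twin class T with |T| ≥ 2k + 5, let v ∈ T, and suppose F is an editing set for G − v with |F| ≤ k (i.e., (G − v) △ F is trivially perfect). Then G △ F is trivially perfect. Consequently (G, k) is a yes-instance of Trivially Perfect Editing if and only if (G − v, k) is. -/
def IsInducedP4 {V : Type*} (G : SimpleGraph V) (a b c d : V) : Prop :=
  G.Adj a b ∧ G.Adj b c ∧ G.Adj c d ∧
  ¬G.Adj a c ∧ ¬G.Adj a d ∧ ¬G.Adj b d ∧
  a ≠ b ∧ a ≠ c ∧ a ≠ d ∧ b ≠ c ∧ b ≠ d ∧ c ≠ d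

def IsInducedC4 {V : Type*} (G : SimpleGraph V) (a b c d : V) : Prop :=
  G.Adj a b ∧ G.Adj b c ∧ G.Adj c d ∧ G.Adj d a ∧
  ¬G.Adj a c ∧ ¬G.Adj b d ∧
  a ≠ b ∧ a ≠ c ∧ a ≠ d ∧ b ≠ c ∧ b ≠ d ∧ c ≠ d

/-- A graph is trivially perfect if it has no induced `P₄` and no induced `C₄`. -/
def TriviallyPerfect {V : Type*} (G : SimpleGraph V) : Prop :=
  ∀ a b c d : V, ¬IsInducedP4 G a b c d ∧ ¬IsInducedC4 G a b c d


def TrueTwins {V : Type*} (G : SimpleGraph V) (u v : V) : Prop :=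
  ∀ w : V, (w = u ∨ G.Adj u w) ↔ (w = v ∨ G.Adj v w)

section Aux
variable {V : Type*} {H : SimpleGraph V} {u v : V}

lemma twin_adj (ht : TrueTwins H u v) (huv : u ≠ v) : H.Adj u v := by
  rcases (ht u).mp (Or.inl rfl) with h | h
  · exact absurd h huv
  · exact h.symm

lemma twin_iff (ht : TrueTwins H u v) (w : V) (hwu : w ≠ u) (hwv : w ≠ v) :
    H.Adj u w ↔ H.Adj v w := by
  have := ht w
  simp [hwu, hwv] at this
  exact this

lemma p4_rev {a b c d : V} (h : IsInducedP4 H a b c d) : IsInducedP4 H d c b a := by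
  obtain ⟨h1,h2,h3,h4,h5,h6,n1,n2,n3,n4,n5,n6⟩ := h
  exact ⟨h3.symm, h2.symm, h1.symm, fun h => h6 h.symm, fun h => h5 h.symm,
    fun h => h4 h.symm, n6.symm, n5.symm, n3.symm, n4.symm, n2.symm, n1.symm⟩

lemma c4_rot {a b c d : V} (h : IsInducedC4 H a b c d) : IsInducedC4 H b c d a := by
  obtain ⟨h1,h2,h3,h4,h5,h6,n1,n2,n3,n4,n5,n6⟩ := h
  exact ⟨h2, h3, h4, h1, fun h => h6 h, fun h => h5 h.symm, n4, n5, n1.symm, n6, n2.symm, n3.symm⟩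

lemma induce_P4_iff (s : Set V) (a b c d : s) :
    IsInducedP4 (H.induce s) a b c d ↔ IsInducedP4 H a b c d := by
  simp [IsInducedP4, SimpleGraph.induce, ne_eq, Subtype.ext_iff]

lemma induce_C4_iff (s : Set V) (a b c d : s) :
    IsInducedC4 (H.induce s) a b c d ↔ IsInducedC4 H a b c d := by
  simp [IsInducedC4, SimpleGraph.induce, ne_eq, Subtype.ext_iff]

lemma tp_induce (h : TriviallyPerfect H) (s : Set V) : TriviallyPerfect (H.induce s) := by
  intro a b c d
  exact ⟨fun hh => (h a b c d).1 ((induce_P4_iff s a b c d).mp hh),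
    fun hh => (h a b c d).2 ((induce_C4_iff s a b c d).mp hh)⟩

lemma tp_of_twin (huv : u ≠ v) (ht : TrueTwins H u v)
    (hTP : TriviallyPerfect (H.induce {x : V | x ≠ v})) : TriviallyPerfect H := by
  have hP : ∀ a b c d : V, a ≠ v → b ≠ v → c ≠ v → d ≠ v → ¬IsInducedP4 H a b c d := by
    intro a b c d ha hb hc hd h
    exact (hTP ⟨a, ha⟩ ⟨b, hb⟩ ⟨c, hc⟩ ⟨d, hd⟩).1 ((induce_P4_iff _ _ _ _ _).mpr h)
  have hC : ∀ a b c d : V, a ≠ v → b ≠ v → c ≠ v → d ≠ v → ¬IsInducedC4 H a b c d := by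
    intro a b c d ha hb hc hd h
    exact (hTP ⟨a, ha⟩ ⟨b, hb⟩ ⟨c, hc⟩ ⟨d, hd⟩).2 ((induce_C4_iff _ _ _ _ _).mpr h)
  have key_p4a : ∀ b c d : V, ¬IsInducedP4 H v b c d := by
    rintro b c d ⟨h1,h2,h3,h4,h5,h6,n1,n2,n3,n4,n5,n6⟩
    by_cases hub : u = b
    · subst hub
      exact h4 ((twin_iff ht c n4.symm n2.symm).mp h2)
    by_cases huc : u = c
    · subst huc
      exact h4 (twin_adj ht huv).symm
    by_cases hud : u = d
    · subst hud
      exact h5 (twin_adj ht huv).symm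
    · exact hP u b c d huv n1.symm n2.symm n3.symm
        ⟨(twin_iff ht b (Ne.symm hub) n1.symm).mpr h1, h2, h3,
         fun h => h4 ((twin_iff ht c (Ne.symm huc) n2.symm).mp h),
         fun h => h5 ((twin_iff ht d (Ne.symm hud) n3.symm).mp h), h6,
         hub, huc, hud, n4, n5, n6⟩
  have key_p4b : ∀ a c d : V, ¬IsInducedP4 H a v c d := by
    rintro a c d ⟨h1,h2,h3,h4,h5,h6,n1,n2,n3,n4,n5,n6⟩
    by_cases hua : u = a
    · subst hua
      exact h4 ((twin_iff ht c n2.symm n4.symm).mpr h2)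
    by_cases huc : u = c
    · subst huc
      exact h4 ((twin_iff ht a n2 n1).mpr h1.symm).symm
    by_cases hud : u = d
    · subst hud
      exact h6 (twin_adj ht huv).symm
    · exact hP a u c d n1 huv n4.symm n5.symm
        ⟨((twin_iff ht a (Ne.symm hua) n1).mpr h1.symm).symm,
         (twin_iff ht c (Ne.symm huc) n4.symm).mpr h2, h3, h4, h5,
         fun h => h6 ((twin_iff ht d (Ne.symm hud) n5.symm).mp h),
         Ne.symm hua, n2, n3, huc, hud, n6⟩
  have key_c4a : ∀ b c d : V, ¬IsInducedC4 H v b c d := by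
    rintro b c d ⟨h1,h2,h3,h4,h5,h6,n1,n2,n3,n4,n5,n6⟩
    by_cases hub : u = b
    · subst hub
      exact h5 ((twin_iff ht c n4.symm n2.symm).mp h2)
    by_cases huc : u = c
    · subst huc
      exact h5 (twin_adj ht huv).symm
    by_cases hud : u = d
    · subst hud
      exact h6 ((twin_iff ht b n5 n1.symm).mpr h1).symm
    · exact hC u b c d huv n1.symm n2.symm n3.symm
        ⟨(twin_iff ht b (Ne.symm hub) n1.symm).mpr h1, h2, h3,
         ((twin_iff ht d (Ne.symm hud) n3.symm).mpr h4.symm).symm,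
         fun h => h5 ((twin_iff ht c (Ne.symm huc) n2.symm).mp h), h6,
         hub, huc, hud, n4, n5, n6⟩
  intro a b c d
  constructor
  · intro h
    by_cases ha : a = v
    · exact key_p4a b c d (ha ▸ h)
    by_cases hb : b = v
    · exact key_p4b a c d (hb ▸ h)
    by_cases hc : c = v
    · exact key_p4b d b a (hc ▸ p4_rev h)
    by_cases hd : d = v
    · exact key_p4a c b a (hd ▸ p4_rev h)
    · exact hP a b c d ha hb hc hd h
  · intro h
    by_cases ha : a = v
    · exact key_c4a b c d (ha ▸ h)
    by_cases hb : b = v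
    · exact key_c4a c d a (hb ▸ c4_rot h)
    by_cases hc : c = v
    · exact key_c4a d a b (hc ▸ c4_rot (c4_rot h))
    by_cases hd : d = v
    · exact key_c4a a b c (hd ▸ c4_rot (c4_rot (c4_rot h)))
    · exact hC a b c d ha hb hc hd h

end Aux

lemma support_ncard_le {V : Type*} [Fintype V] [DecidableEq V] (F : SimpleGraph V) :
    F.support.ncard ≤ 2 * F.edgeSet.ncard := by
  classical
  have hfin : F.edgeSet.Finite := Set.toFinite _
  set E := hfin.toFinset with hE
  set t : Sym2 V → Finset V := fun e => Finset.univ.filter (· ∈ e) with htdef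
  have hcard : ∀ e : Sym2 V, (t e).card ≤ 2 := by
    intro e
    induction e using Sym2.ind with
    | _ a b =>
      have hsub : t s(a, b) ⊆ {a, b} := by
        intro x hx
        simp only [htdef, Finset.mem_filter, Sym2.mem_iff] at hx
        simp [hx.2]
      exact (Finset.card_le_card hsub).trans ((Finset.card_insert_le a {b}).trans (by simp))
  have hsub2 : F.support ⊆ ↑(E.biUnion t) := by
    intro x hx
    obtain ⟨w, hw⟩ := F.mem_support.mp hx
    exact Finset.mem_coe.mpr (Finset.mem_biUnion.mpr
      ⟨s(x, w), hfin.mem_toFinset.mpr hw, by simp [htdef]⟩)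
  calc F.support.ncard ≤ (↑(E.biUnion t) : Set V).ncard :=
        Set.ncard_le_ncard hsub2 (Set.toFinite _)
    _ = (E.biUnion t).card := Set.ncard_coe_finset _
    _ ≤ ∑ e ∈ E, (t e).card := Finset.card_biUnion_le
    _ ≤ ∑ _e ∈ E, 2 := Finset.sum_le_sum fun e _ => hcard e
    _ = 2 * E.card := by rw [Finset.sum_const, smul_eq_mul, mul_comm]
    _ = 2 * F.edgeSet.ncard := by rw [Set.ncard_eq_toFinset_card _ hfin]

lemma main_tp {V : Type*} [Fintype V] [DecidableEq V]
    (G : SimpleGraph V) (k : ℕ) (T : Set V)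
    (hpair : ∀ u ∈ T, ∀ w ∈ T, TrueTwins G u w)
    (hbig : 2 * k + 5 ≤ T.ncard)
    (v : V) (hv : v ∈ T)
    (F : SimpleGraph V) (hFv : ∀ w : V, ¬F.Adj v w)
    (hFk : F.edgeSet.ncard ≤ k)
    (hTP : TriviallyPerfect ((symmDiff G F).induce {x : V | x ≠ v})) :
    TriviallyPerfect (symmDiff G F) := by
  have hsub : ¬(T ⊆ insert v F.support) := by
    intro hsubset
    have h1 : (insert v F.support).ncard ≤ 2 * k + 1 := by
      have := Set.ncard_insert_le v F.support
      have h2 := support_ncard_le F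
      omega
    have := Set.ncard_le_ncard hsubset (Set.toFinite _)
    omega
  obtain ⟨u, huT, hu2⟩ := Set.not_subset.mp hsub
  have hune : u ≠ v := fun h => hu2 (h ▸ Set.mem_insert _ _)
  have huF : ∀ w, ¬F.Adj u w := fun w hw =>
    hu2 (Set.mem_insert_of_mem _ (F.mem_support.mpr ⟨w, hw⟩))
  have hadj : ∀ x y, ¬F.Adj x y → ((symmDiff G F).Adj x y ↔ G.Adj x y) := by
    intro x y hxy
    simp [symmDiff_def, hxy]
  have htwin : TrueTwins (symmDiff G F) u v := by
    intro w
    rw [hadj u w (huF w), hadj v w (hFv w)]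
    exact hpair u huT v hv w
  exact tp_of_twin hune htwin hTP

/-- If `T` is a true twin class of size at least `2k + 5`,
`v ∈ T`, and `F` is an editing set of size at most `k` for `G − v`
(`F` not incident to `v`), then `G △ F` is trivially perfect; consequently
`(G, k)` and `(G − v, k)` are equivalent instances of editing. -/
theorem twin_class_reduction_safe {V : Type*} [Fintype V] [DecidableEq V]
    (G : SimpleGraph V) (k : ℕ) (T : Set V)
    (hpair : ∀ u ∈ T, ∀ w ∈ T, TrueTwins G u w)
    (hmax : ∀ w : V, (∀ u ∈ T, TrueTwins G u w) → w ∈ T)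
    (hbig : 2 * k + 5 ≤ T.ncard)
    (v : V) (hv : v ∈ T)
    (F : SimpleGraph V) (hFv : ∀ w : V, ¬F.Adj v w)
    (hFk : F.edgeSet.ncard ≤ k)
    (hTP : TriviallyPerfect ((symmDiff G F).induce {x : V | x ≠ v})) :
    TriviallyPerfect (symmDiff G F) ∧
      ((∃ F₁ : SimpleGraph V, F₁.edgeSet.ncard ≤ k ∧
          TriviallyPerfect (symmDiff G F₁)) ↔
        (∃ F₂ : SimpleGraph {x : V | x ≠ v},
          F₂.edgeSet.ncard ≤ k ∧
          TriviallyPerfect (symmDiff (G.induce {x : V | x ≠ v}) F₂))) := by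
  classical
  set S : Set V := {x : V | x ≠ v} with hS
  have hinj : Function.Injective (Sym2.map (Subtype.val : S → V)) :=
    Sym2.map.injective Subtype.val_injective
  refine ⟨main_tp G k T hpair hbig v hv F hFv hFk hTP, ?_, ?_⟩
  · rintro ⟨F₁, hk1, hTP1⟩
    refine ⟨F₁.induce S, ?_, ?_⟩
    · have himg : Sym2.map (Subtype.val : S → V) '' (F₁.induce S).edgeSet ⊆ F₁.edgeSet := by
        rintro e ⟨e', he', rfl⟩
        induction e' using Sym2.ind with
        | _ a b =>
          simp only [SimpleGraph.mem_edgeSet, SimpleGraph.induce, SimpleGraph.comap_adj] at he'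
          simpa [SimpleGraph.mem_edgeSet] using he'
      calc (F₁.induce S).edgeSet.ncard
          = (Sym2.map (Subtype.val : S → V) '' (F₁.induce S).edgeSet).ncard :=
            (Set.ncard_image_of_injective _ hinj).symm
        _ ≤ F₁.edgeSet.ncard := Set.ncard_le_ncard himg (Set.toFinite _)
        _ ≤ k := hk1
    · have hEq : symmDiff (G.induce S) (F₁.induce S) = (symmDiff G F₁).induce S := by
        ext a b
        simp [symmDiff_def, SimpleGraph.induce]
      rw [hEq]
      exact tp_induce hTP1 S
  · rintro ⟨F₂, hk2, hTP2⟩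
    set F₁ : SimpleGraph V := SimpleGraph.map (Function.Embedding.subtype _) F₂ with hF₁
    have hF₁adj : ∀ x y : V, F₁.Adj x y ↔
        ∃ a b : S, F₂.Adj a b ∧ (a : V) = x ∧ (b : V) = y := by
      intro x y
      rw [hF₁, SimpleGraph.map_adj]; rfl
    have hFv' : ∀ w : V, ¬F₁.Adj v w := by
      intro w h
      obtain ⟨a, b, _, ha, _⟩ := (hF₁adj v w).mp h
      exact a.2 ha
    have hedge : F₁.edgeSet = Sym2.map (Subtype.val : S → V) '' F₂.edgeSet := by
      ext e
      constructor
      · intro h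
        induction e using Sym2.ind with
        | _ x y =>
          obtain ⟨a, b, hab, ha, hb⟩ := (hF₁adj x y).mp ((F₁.mem_edgeSet).mp h)
          exact ⟨s(a, b), (F₂.mem_edgeSet).mpr hab, by simp [ha, hb]⟩
      · rintro ⟨e', he', rfl⟩
        induction e' using Sym2.ind with
        | _ a b =>
          rw [Sym2.map_pair_eq]
          exact (F₁.mem_edgeSet).mpr
            ((hF₁adj _ _).mpr ⟨a, b, (F₂.mem_edgeSet).mp he', rfl, rfl⟩)
    have hk1 : F₁.edgeSet.ncard ≤ k := by
      rw [hedge, Set.ncard_image_of_injective _ hinj]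
      exact hk2
    have hind : F₁.induce S = F₂ := by
      ext a b
      constructor
      · intro h
        obtain ⟨a', b', hab, ha, hb⟩ := (hF₁adj a b).mp h
        rwa [show a' = a from Subtype.ext ha, show b' = b from Subtype.ext hb] at hab
      · intro h
        exact (hF₁adj a b).mpr ⟨a, b, h, rfl, rfl⟩
    have hTP1 : TriviallyPerfect ((symmDiff G F₁).induce S) := by
      have hEq : (symmDiff G F₁).induce S = symmDiff (G.induce S) (F₁.induce S) := by
        ext a b
        simp [symmDiff_def, SimpleGraph.induce]
      rw [hEq, hind]
      exact hTP2
    exact ⟨F₁, hk1, main_tp G k T hpair hbig v hv F₁ hFv' hk1 hTP1⟩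
end

section
/- Let G be a graph, M ⊆ V(G) a module of G such that G[M] has no induced P₄, and let W ⊆ V(G) with |W| = 4 be such that G[W] is an induced P₄. Then |W ∩ M| ≤ 1. -/
/-- `M` is a module of `G`. -/
def IsModule {V : Type*} (G : SimpleGraph V) (M : Set V) : Prop :=
  ∀ v ∉ M, (∀ m ∈ M, G.Adj v m) ∨ (∀ m ∈ M, ¬G.Adj v m)

/-- If `M` is a module with `G[M]` having no induced `P₄`, then any
induced `P₄` of `G` meets `M` in at most one vertex. -/
theorem inducedP4_inter_module {V : Type*} (G : SimpleGraph V) (M : Set V)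
    (hM : IsModule G M)
    (hMP4 : ∀ a b c d : V, a ∈ M → b ∈ M → c ∈ M → d ∈ M → ¬IsInducedP4 G a b c d)
    (a b c d : V) (hP4 : IsInducedP4 G a b c d) :
    (({a, b, c, d} : Set V) ∩ M).ncard ≤ 1 := by
  obtain ⟨hab, hbc, hcd, hac, had, hbd, _⟩ := hP4
  have key : ∀ {x y v : V}, x ∈ M → y ∈ M → G.Adj v x → ¬G.Adj v y → v ∈ M := by
    intro x y v hx hy hvx hvy
    by_contra h
    rcases hM v h with h1 | h1
    · exact hvy (h1 y hy)
    · exact (h1 x hx) hvx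
  have Hab : a ∈ M → b ∈ M → False := fun ha hb =>
    have hc : c ∈ M := key hb ha hbc.symm (fun h => hac h.symm)
    have hd : d ∈ M := key hc hb hcd.symm (fun h => hbd h.symm)
    hMP4 a b c d ha hb hc hd ⟨hab, hbc, hcd, hac, had, hbd, ‹_›⟩
  have Hac : a ∈ M → c ∈ M → False := fun ha hc =>
    have hd : d ∈ M := key hc ha hcd.symm (fun h => had h.symm)
    have hb : b ∈ M := key ha hd hab.symm hbd
    hMP4 a b c d ha hb hc hd ⟨hab, hbc, hcd, hac, had, hbd, ‹_›⟩
  have Had : a ∈ M → d ∈ M → False := fun ha hd =>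
    have hb : b ∈ M := key ha hd hab.symm hbd
    have hc : c ∈ M := key hb ha hbc.symm (fun h => hac h.symm)
    hMP4 a b c d ha hb hc hd ⟨hab, hbc, hcd, hac, had, hbd, ‹_›⟩
  have Hbc : b ∈ M → c ∈ M → False := fun hb hc =>
    have ha : a ∈ M := key hb hc hab hac
    have hd : d ∈ M := key hc hb hcd.symm (fun h => hbd h.symm)
    hMP4 a b c d ha hb hc hd ⟨hab, hbc, hcd, hac, had, hbd, ‹_›⟩
  have Hbd : b ∈ M → d ∈ M → False := fun hb hd =>
    have ha : a ∈ M := key hb hd hab had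
    have hc : c ∈ M := key hb ha hbc.symm (fun h => hac h.symm)
    hMP4 a b c d ha hb hc hd ⟨hab, hbc, hcd, hac, had, hbd, ‹_›⟩
  have Hcd : c ∈ M → d ∈ M → False := fun hc hd =>
    have hb : b ∈ M := key hc hd hbc hbd
    have ha : a ∈ M := key hb hc hab hac
    hMP4 a b c d ha hb hc hd ⟨hab, hbc, hcd, hac, had, hbd, ‹_›⟩
  have hfin : (({a, b, c, d} : Set V) ∩ M).Finite :=
    ((Set.finite_singleton d).insert c |>.insert b |>.insert a).inter_of_left M
  rw [Set.ncard_le_one hfin]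
  rintro x ⟨hx, hxM⟩ y ⟨hy, hyM⟩
  simp only [Set.mem_insert_iff, Set.mem_singleton_iff] at hx hy
  rcases hx with rfl | rfl | rfl | rfl <;> rcases hy with rfl | rfl | rfl | rfl <;>
    first
      | rfl
      | exact absurd hxM (fun h => Hab h hyM)
      | exact absurd hxM (fun h => Hac h hyM)
      | exact absurd hxM (fun h => Had h hyM)
      | exact absurd hxM (fun h => Hbc h hyM)
      | exact absurd hxM (fun h => Hbd h hyM)
      | exact absurd hxM (fun h => Hcd h hyM)
      | exact absurd hyM (fun h => Hab h hxM)
      | exact absurd hyM (fun h => Hac h hxM)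
      | exact absurd hyM (fun h => Had h hxM)
      | exact absurd hyM (fun h => Hbc h hxM)
      | exact absurd hyM (fun h => Hbd h hxM)
      | exact absurd hyM (fun h => Hcd h hxM)
end

section
/- Let H be a cycle on 3p vertices for some p > 1, and let F ⊆ (V(H) choose 2) be an editing set for H (i.e., H △ F is trivially perfect). Then |F| ≥ p. -/
/-- The cycle on `ZMod n` (vertices in cyclic order, `x` adjacent to `x ± 1`). -/
def cycleZ (n : ℕ) : SimpleGraph (ZMod n) where
  Adj x y := x ≠ y ∧ (y = x + 1 ∨ x = y + 1)
  symm := by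
    constructor
    intro x y h
    exact ⟨h.1.symm, h.2.symm⟩
  loopless := by
    constructor
    intro x h
    exact h.1 rfl

lemma vinj {n : ℕ} (a : ZMod n) {k l : ℕ} (hk : k < n) (hl : l < n)
    (h : a + (k : ZMod n) = a + (l : ZMod n)) : k = l := by
  have h2 := add_left_cancel h
  have h3 := congrArg ZMod.val h2
  rwa [ZMod.val_cast_of_lt hk, ZMod.val_cast_of_lt hl] at h3

lemma segment_hit {n : ℕ} (hn : 6 ≤ n) (F : SimpleGraph (ZMod n))
    (hTP : TriviallyPerfect (symmDiff (cycleZ n) F)) (a : ZMod n) :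
    ∃ r t : ℕ, r < 3 ∧ 0 < t ∧ t < 3 ∧ r + t ≤ 3 ∧
      F.Adj (a + (r : ZMod n)) (a + ((r + t : ℕ) : ZMod n)) := by
  by_contra hcon
  push_neg at hcon
  set v : ℕ → ZMod n := fun k => a + (k : ZMod n) with hv
  have hne : ∀ k l : ℕ, k < n → l < n → k ≠ l → v k ≠ v l := by
    intro k l hk hl hkl h
    exact hkl (vinj a hk hl h)
  have hstep : ∀ k : ℕ, v (k + 1) = v k + 1 := by
    intro k
    simp only [hv]
    push_cast
    ring
  have hadj : ∀ k : ℕ, k + 1 < n → (cycleZ n).Adj (v k) (v (k + 1)) := by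
    intro k hk
    exact ⟨hne k (k+1) (by omega) hk (by omega), Or.inl (hstep k)⟩
  have hnadj : ∀ k l : ℕ, k + 2 ≤ l → l ≤ k + 3 → l + 1 < n → ¬ (cycleZ n).Adj (v k) (v l) := by
    intro k l h1 h2 h3 ⟨hne', h⟩
    rcases h with h | h
    · have h' : v l = v (k + 1) := by rw [hstep]; exact h
      have := vinj a (show l < n by omega) (show k + 1 < n by omega) h'
      omega
    · have h' : v k = v (l + 1) := by rw [hstep]; exact h
      have := vinj a (show k < n by omega) (show l + 1 < n by omega) h'
      omega
  have Gadj : ∀ x y, (symmDiff (cycleZ n) F).Adj x y ↔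
      ((cycleZ n).Adj x y ∧ ¬ F.Adj x y) ∨ (F.Adj x y ∧ ¬ (cycleZ n).Adj x y) := by
    intro x y
    rw [symmDiff_def]
    simp [SimpleGraph.sup_adj, SimpleGraph.sdiff_adj]
  -- F avoids the five pairs
  have hF : ∀ r t : ℕ, r < 3 → 0 < t → t < 3 → r + t ≤ 3 → ¬ F.Adj (v r) (v (r + t)) := by
    intro r t h1 h2 h3 h4
    exact hcon r t h1 h2 h3 h4
  have g01 : (symmDiff (cycleZ n) F).Adj (v 0) (v 1) :=
    (Gadj _ _).2 (Or.inl ⟨hadj 0 (by omega), hF 0 1 (by omega) (by omega) (by omega) (by omega)⟩)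
  have g12 : (symmDiff (cycleZ n) F).Adj (v 1) (v 2) :=
    (Gadj _ _).2 (Or.inl ⟨hadj 1 (by omega), hF 1 1 (by omega) (by omega) (by omega) (by omega)⟩)
  have g23 : (symmDiff (cycleZ n) F).Adj (v 2) (v 3) :=
    (Gadj _ _).2 (Or.inl ⟨hadj 2 (by omega), hF 2 1 (by omega) (by omega) (by omega) (by omega)⟩)
  have g02 : ¬ (symmDiff (cycleZ n) F).Adj (v 0) (v 2) := by
    rw [Gadj]
    rintro (⟨h, -⟩ | ⟨h, -⟩)
    · exact hnadj 0 2 (by omega) (by omega) (by omega) h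
    · exact hF 0 2 (by omega) (by omega) (by omega) (by omega) h
  have g13 : ¬ (symmDiff (cycleZ n) F).Adj (v 1) (v 3) := by
    rw [Gadj]
    rintro (⟨h, -⟩ | ⟨h, -⟩)
    · exact hnadj 1 3 (by omega) (by omega) (by omega) h
    · exact hF 1 2 (by omega) (by omega) (by omega) (by omega) h
  have hn03 : ¬ (cycleZ n).Adj (v 0) (v 3) := hnadj 0 3 (by omega) (by omega) (by omega)
  have d01 := hne 0 1 (by omega) (by omega) (by omega)
  have d02 := hne 0 2 (by omega) (by omega) (by omega)
  have d03 := hne 0 3 (by omega) (by omega) (by omega)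
  have d12 := hne 1 2 (by omega) (by omega) (by omega)
  have d13 := hne 1 3 (by omega) (by omega) (by omega)
  have d23 := hne 2 3 (by omega) (by omega) (by omega)
  by_cases hF03 : F.Adj (v 0) (v 3)
  · have g03 : (symmDiff (cycleZ n) F).Adj (v 0) (v 3) :=
      (Gadj _ _).2 (Or.inr ⟨hF03, hn03⟩)
    exact (hTP (v 0) (v 1) (v 2) (v 3)).2
      ⟨g01, g12, g23, g03.symm, g02, g13, d01, d02, d03, d12, d13, d23⟩
  · have g03 : ¬ (symmDiff (cycleZ n) F).Adj (v 0) (v 3) := by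
      rw [Gadj]
      rintro (⟨h, -⟩ | ⟨h, -⟩)
      · exact hn03 h
      · exact hF03 h
    exact (hTP (v 0) (v 1) (v 2) (v 3)).1
      ⟨g01, g12, g23, g02, g03, g13, d01, d02, d03, d12, d13, d23⟩

/-- Any editing set for the cycle on `3p` vertices (`p > 1`) has
size at least `p`. -/
theorem cycle_editing_lower_bound (p : ℕ) (hp : 1 < p)
    (F : SimpleGraph (ZMod (3 * p)))
    (hTP : TriviallyPerfect (symmDiff (cycleZ (3 * p)) F)) :
    p ≤ F.edgeSet.ncard := by
  have hn : 6 ≤ 3 * p := by omega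
  haveI : NeZero (3 * p) := ⟨by omega⟩
  have hch : ∀ i : Fin p, ∃ r t : ℕ, r < 3 ∧ 0 < t ∧ t < 3 ∧ r + t ≤ 3 ∧
      F.Adj (((3 * i.val : ℕ) : ZMod (3 * p)) + (r : ZMod (3 * p)))
            (((3 * i.val : ℕ) : ZMod (3 * p)) + ((r + t : ℕ) : ZMod (3 * p))) := by
    intro i
    exact segment_hit hn F hTP _
  choose r t hr ht0 ht2 hrt hadj using hch
  set f : Fin p → Sym2 (ZMod (3 * p)) := fun i =>
    s(((3 * i.val + r i : ℕ) : ZMod (3 * p)), ((3 * i.val + r i + t i : ℕ) : ZMod (3 * p))) with hf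
  have hmem : ∀ i, f i ∈ F.edgeSet := by
    intro i
    rw [hf]
    simp only [SimpleGraph.mem_edgeSet]
    have e2 : ((3 * i.val + r i : ℕ) : ZMod (3 * p))
        = ((3 * i.val : ℕ) : ZMod (3 * p)) + ((r i : ℕ) : ZMod (3 * p)) := by push_cast; ring
    have e3 : ((3 * i.val + r i + t i : ℕ) : ZMod (3 * p))
        = ((3 * i.val : ℕ) : ZMod (3 * p)) + ((r i + t i : ℕ) : ZMod (3 * p)) := by
      push_cast; ring
    rw [e2, e3]
    exact hadj i
  have hinj : Function.Injective f := by
    intro i j hij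
    simp only [hf, Sym2.eq, Sym2.rel_iff', Prod.mk.injEq, Prod.swap_prod_mk] at hij
    rcases hij with ⟨h1, -⟩ | ⟨h1, h2⟩
    · have e1 : 3 * i.val + r i = 3 * j.val + r j := by
        have := congrArg ZMod.val h1
        rwa [ZMod.val_cast_of_lt (by have := i.isLt; have := hr i; omega),
             ZMod.val_cast_of_lt (by have := j.isLt; have := hr j; omega)] at this
      have := hr i; have := hr j
      exact Fin.ext (by omega)
    · exfalso
      -- h1 : c(3i+ri) = c(3j+rj+tj), h2 : c(3i+ri+ti) = c(3j+rj)
      have key : ((t i + t j : ℕ) : ZMod (3 * p)) = 0 := by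
        have h1' : ((3 * i.val + r i : ℕ) : ZMod (3 * p))
            = ((3 * j.val + r j : ℕ) : ZMod (3 * p)) + (t j : ZMod (3 * p)) := by
          rw [h1]; push_cast; ring
        have h2' : ((3 * i.val + r i : ℕ) : ZMod (3 * p)) + (t i : ZMod (3 * p))
            = ((3 * j.val + r j : ℕ) : ZMod (3 * p)) := by
          rw [← h2]; push_cast; ring
        have : ((3 * j.val + r j : ℕ) : ZMod (3 * p)) + (t j : ZMod (3 * p)) + (t i : ZMod (3 * p))
            = ((3 * j.val + r j : ℕ) : ZMod (3 * p)) := by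
          rw [← h1', h2']
        push_cast
        linear_combination this
      rw [ZMod.natCast_eq_zero_iff] at key
      have := Nat.le_of_dvd (by have := ht0 i; have := ht0 j; omega) key
      have := ht2 i; have := ht2 j
      omega
  have hsub : ↑(Finset.image f Finset.univ) ⊆ F.edgeSet := by
    intro e he
    simp only [Finset.coe_image, Set.mem_image] at he
    obtain ⟨i, -, rfl⟩ := he
    exact hmem i
  calc p = (Finset.image f Finset.univ).card := by
        rw [Finset.card_image_of_injective _ hinj, Finset.card_univ, Fintype.card_fin]
    _ = (↑(Finset.image f Finset.univ) : Set (Sym2 (ZMod (3 * p)))).ncard := by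
        rw [Set.ncard_coe_finset]
    _ ≤ F.edgeSet.ncard := Set.ncard_le_ncard hsub (Set.toFinite _)
end

section
/- Let H be a cycle on 3p vertices v₀, v₁, …, v__{3p−1} (in cyclic order) for p > 1, and let F be an editing set for H with |F| = p. Then F consists of deletions of every third edge of the cycle: either F = {v_{3i}v_{3i+1} : 0 ≤ i < p}, or F = {v_{3i+1}v_{3i+2} : 0 ≤ i < p}, or F = {v_{3i+2}v_{3i+3} : 0 ≤ i < p} (indices mod 3p). -/
set_option linter.unusedSectionVars false
set_option linter.unusedVariables false
set_option maxHeartbeats 1000000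

namespace CycleTight


variable {n : ℕ} [NeZero n]

lemma cast_inj_small (hn : 6 ≤ n) {a b : ℕ} (ha : a < 6) (hb : b < 6)
    (h : ((a : ℕ) : ZMod n) = ((b : ℕ) : ZMod n)) : a = b := by
  have h2 := congrArg ZMod.val h
  rwa [ZMod.val_cast_of_lt (by omega), ZMod.val_cast_of_lt (by omega)] at h2

lemma sub_cast_inj (hn : 6 ≤ n) {x : ZMod n} {a b : ℕ} (ha : a < 6) (hb : b < 6)
    (h : x - (a : ℕ) = x - (b : ℕ)) : a = b :=
  cast_inj_small hn ha hb (by linear_combination -h)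

lemma cast_ne_zero (hn : 6 ≤ n) {k : ℕ} (h0 : 0 < k) (h6 : k < 6) :
    ((k : ℕ) : ZMod n) ≠ 0 := by
  intro h
  rw [ZMod.natCast_eq_zero_iff] at h
  exact absurd (Nat.le_of_dvd h0 h) (by omega)

lemma one_ne (hn : 6 ≤ n) : (1 : ZMod n) ≠ 0 := by
  have := cast_ne_zero (n := n) hn (k := 1) (by norm_num) (by norm_num)
  simpa using this

lemma two_ne (hn : 6 ≤ n) : (2 : ZMod n) ≠ 0 := by
  have := cast_ne_zero (n := n) hn (k := 2) (by norm_num) (by norm_num)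
  simpa using this

lemma three_ne (hn : 6 ≤ n) : (3 : ZMod n) ≠ 0 := by
  have := cast_ne_zero (n := n) hn (k := 3) (by norm_num) (by norm_num)
  simpa using this

lemma four_ne (hn : 6 ≤ n) : (4 : ZMod n) ≠ 0 := by
  have := cast_ne_zero (n := n) hn (k := 4) (by norm_num) (by norm_num)
  simpa using this

lemma cyc_adj1 (hn : 6 ≤ n) (i : ZMod n) : (cycleZ n).Adj i (i + 1) :=
  ⟨fun h => one_ne hn (by linear_combination -h), Or.inl rfl⟩

lemma cyc_nadj2 (hn : 6 ≤ n) (i : ZMod n) : ¬ (cycleZ n).Adj i (i + 2) := by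
  rintro ⟨h1, h2 | h2⟩
  · exact one_ne hn (by linear_combination h2)
  · exact three_ne hn (by linear_combination -h2)

lemma cyc_nadj3 (hn : 6 ≤ n) (i : ZMod n) : ¬ (cycleZ n).Adj i (i + 3) := by
  rintro ⟨h1, h2 | h2⟩
  · exact two_ne hn (by linear_combination h2)
  · exact four_ne hn (by linear_combination -h2)

def winE (n : ℕ) (i : ZMod n) : Finset (Sym2 (ZMod n)) :=
  {s(i, i+1), s(i+1, i+2), s(i+2, i+3), s(i, i+2), s(i, i+3), s(i+1, i+3)}

lemma winE_char (i x y : ZMod n) (h : s(x, y) ∈ winE n i) :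
    ∃ a b : ℕ, a < 4 ∧ b < 4 ∧ a ≠ b ∧ x = i + (a : ℕ) ∧ y = i + (b : ℕ) := by
  simp only [winE, Finset.mem_insert, Finset.mem_singleton, Sym2.eq_iff] at h
  rcases h with (⟨h1,h2⟩|⟨h1,h2⟩)|(⟨h1,h2⟩|⟨h1,h2⟩)|(⟨h1,h2⟩|⟨h1,h2⟩)|(⟨h1,h2⟩|⟨h1,h2⟩)|(⟨h1,h2⟩|⟨h1,h2⟩)|(⟨h1,h2⟩|⟨h1,h2⟩)
  · exact ⟨0, 1, by norm_num, by norm_num, by norm_num,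
      by push_cast; linear_combination h1, by push_cast; linear_combination h2⟩
  · exact ⟨1, 0, by norm_num, by norm_num, by norm_num,
      by push_cast; linear_combination h1, by push_cast; linear_combination h2⟩
  · exact ⟨1, 2, by norm_num, by norm_num, by norm_num,
      by push_cast; linear_combination h1, by push_cast; linear_combination h2⟩
  · exact ⟨2, 1, by norm_num, by norm_num, by norm_num,
      by push_cast; linear_combination h1, by push_cast; linear_combination h2⟩
  · exact ⟨2, 3, by norm_num, by norm_num, by norm_num,
      by push_cast; linear_combination h1, by push_cast; linear_combination h2⟩
  · exact ⟨3, 2, by norm_num, by norm_num, by norm_num,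
      by push_cast; linear_combination h1, by push_cast; linear_combination h2⟩
  · exact ⟨0, 2, by norm_num, by norm_num, by norm_num,
      by push_cast; linear_combination h1, by push_cast; linear_combination h2⟩
  · exact ⟨2, 0, by norm_num, by norm_num, by norm_num,
      by push_cast; linear_combination h1, by push_cast; linear_combination h2⟩
  · exact ⟨0, 3, by norm_num, by norm_num, by norm_num,
      by push_cast; linear_combination h1, by push_cast; linear_combination h2⟩
  · exact ⟨3, 0, by norm_num, by norm_num, by norm_num,
      by push_cast; linear_combination h1, by push_cast; linear_combination h2⟩
  · exact ⟨1, 3, by norm_num, by norm_num, by norm_num,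
      by push_cast; linear_combination h1, by push_cast; linear_combination h2⟩
  · exact ⟨3, 1, by norm_num, by norm_num, by norm_num,
      by push_cast; linear_combination h1, by push_cast; linear_combination h2⟩

def Aset (n : ℕ) [NeZero n] (e : Sym2 (ZMod n)) : Finset (ZMod n) :=
  Finset.univ.filter (fun i => e ∈ winE n i)

lemma mem_Aset {e : Sym2 (ZMod n)} {i : ZMod n} : i ∈ Aset n e ↔ e ∈ winE n i := by
  simp [Aset]

lemma Aset_subset (hn : 6 ≤ n) (x y : ZMod n) :
    Aset n s(x, y) ⊆ (Finset.range 4).image (fun k : ℕ => x - (k : ℕ)) := by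
  intro i hi
  obtain ⟨a, b, ha, hb, hab, h1, h2⟩ := winE_char i x y (mem_Aset.mp hi)
  exact Finset.mem_image.mpr ⟨a, Finset.mem_range.mpr ha, by linear_combination h1⟩

lemma S4_card (hn : 6 ≤ n) (x : ZMod n) :
    ((Finset.range 4).image (fun k : ℕ => x - (k : ℕ))).card = 4 := by
  rw [Finset.card_image_of_injOn, Finset.card_range]
  intro a ha b hb h
  rw [Finset.mem_coe, Finset.mem_range] at ha hb
  exact sub_cast_inj hn (by omega) (by omega) h

lemma memD (hn : 6 ≤ n) {x y : ZMod n} {k : ℕ} (hk : k < 4)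
    (h : x - (k : ℕ) ∈ Aset n s(x, y)) :
    ∃ b : ℕ, b < 4 ∧ b ≠ k ∧
      ((k < b ∧ (y - x).val = b - k) ∨ (b < k ∧ (y - x).val = n - (k - b))) := by
  obtain ⟨a, b, ha, hb, hab, h1, h2⟩ := winE_char _ x y (mem_Aset.mp h)
  have hak : a = k := cast_inj_small hn (by omega) (by omega) (by linear_combination -h1)
  subst hak
  refine ⟨b, hb, fun hbk => hab hbk.symm, ?_⟩
  rcases Nat.lt_trichotomy a b with hlt | heq | hgt
  · left
    refine ⟨hlt, ?_⟩
    have hyx : y - x = ((b - a : ℕ) : ZMod n) := by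
      rw [Nat.cast_sub hlt.le]
      linear_combination h2 - h1
    rw [hyx, ZMod.val_cast_of_lt (by omega)]
  · exact absurd heq hab
  · right
    refine ⟨hgt, ?_⟩
    have hyx : y - x = ((n - (a - b) : ℕ) : ZMod n) := by
      rw [Nat.cast_sub (by omega : a - b ≤ n), Nat.cast_sub hgt.le, ZMod.natCast_self]
      linear_combination h2 - h1
    rw [hyx, ZMod.val_cast_of_lt (by omega)]

lemma cardA_le (hn : 6 ≤ n) (x y : ZMod n) : (Aset n s(x, y)).card ≤ 3 := by
  by_contra hcon
  push_neg at hcon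
  have hsub := Aset_subset hn x y
  have h4 := S4_card hn x
  have hle := Finset.card_le_card hsub
  have heq : Aset n s(x, y) = (Finset.range 4).image (fun k : ℕ => x - (k : ℕ)) :=
    Finset.eq_of_subset_of_card_le hsub (by omega)
  have hmem : ∀ k : ℕ, k < 4 → x - (k : ℕ) ∈ Aset n s(x, y) := by
    intro k hk
    rw [heq]
    exact Finset.mem_image.mpr ⟨k, Finset.mem_range.mpr hk, rfl⟩
  obtain ⟨b0, hb0, hbk0, hc0⟩ := memD hn (by norm_num) (hmem 0 (by norm_num))
  obtain ⟨b1, hb1, hbk1, hc1⟩ := memD hn (by norm_num) (hmem 1 (by norm_num))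
  obtain ⟨b2, hb2, hbk2, hc2⟩ := memD hn (by norm_num) (hmem 2 (by norm_num))
  obtain ⟨b3, hb3, hbk3, hc3⟩ := memD hn (by norm_num) (hmem 3 (by norm_num))
  have hDlt := ZMod.val_lt (y - x)
  omega

lemma cardA_eq3 (hn : 6 ≤ n) (x y : ZMod n) (h3 : (Aset n s(x, y)).card = 3) :
    (y - x).val = 1 ∨ (y - x).val = n - 1 := by
  by_contra hcon
  push_neg at hcon
  obtain ⟨hD1, hDn1⟩ := hcon
  have hsub := Aset_subset hn x y
  have h4 := S4_card hn x
  have hsd : (((Finset.range 4).image (fun k : ℕ => x - (k : ℕ))) \ Aset n s(x, y)).card = 1 := by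
    rw [Finset.card_sdiff_of_subset hsub, h4, h3]
  obtain ⟨z, hz⟩ := Finset.card_eq_one.mp hsd
  have hzS : z ∈ (Finset.range 4).image (fun k : ℕ => x - (k : ℕ)) := by
    have hzz : z ∈ ((Finset.range 4).image (fun k : ℕ => x - (k : ℕ))) \ Aset n s(x, y) := by
      rw [hz]; exact Finset.mem_singleton_self z
    exact (Finset.mem_sdiff.mp hzz).1
  obtain ⟨j, hj, hjz⟩ := Finset.mem_image.mp hzS
  rw [Finset.mem_range] at hj
  have hmem : ∀ k : ℕ, k < 4 → k ≠ j → x - (k : ℕ) ∈ Aset n s(x, y) := by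
    intro k hk hkj
    by_contra hni
    have hmm : x - (k : ℕ) ∈ ((Finset.range 4).image (fun k : ℕ => x - (k : ℕ))) \ Aset n s(x, y) :=
      Finset.mem_sdiff.mpr ⟨Finset.mem_image.mpr ⟨k, Finset.mem_range.mpr hk, rfl⟩, hni⟩
    rw [hz, Finset.mem_singleton] at hmm
    exact hkj (sub_cast_inj hn (by omega) (by omega) (hmm.trans hjz.symm))
  have hDlt := ZMod.val_lt (y - x)
  interval_cases j
  · obtain ⟨b1, hb1, hbk1, hc1⟩ := memD hn (by norm_num) (hmem 1 (by norm_num) (by norm_num))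
    obtain ⟨b2, hb2, hbk2, hc2⟩ := memD hn (by norm_num) (hmem 2 (by norm_num) (by norm_num))
    obtain ⟨b3, hb3, hbk3, hc3⟩ := memD hn (by norm_num) (hmem 3 (by norm_num) (by norm_num))
    omega
  · obtain ⟨b0, hb0, hbk0, hc0⟩ := memD hn (by norm_num) (hmem 0 (by norm_num) (by norm_num))
    obtain ⟨b2, hb2, hbk2, hc2⟩ := memD hn (by norm_num) (hmem 2 (by norm_num) (by norm_num))
    obtain ⟨b3, hb3, hbk3, hc3⟩ := memD hn (by norm_num) (hmem 3 (by norm_num) (by norm_num))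
    omega
  · obtain ⟨b0, hb0, hbk0, hc0⟩ := memD hn (by norm_num) (hmem 0 (by norm_num) (by norm_num))
    obtain ⟨b1, hb1, hbk1, hc1⟩ := memD hn (by norm_num) (hmem 1 (by norm_num) (by norm_num))
    obtain ⟨b3, hb3, hbk3, hc3⟩ := memD hn (by norm_num) (hmem 3 (by norm_num) (by norm_num))
    omega
  · obtain ⟨b0, hb0, hbk0, hc0⟩ := memD hn (by norm_num) (hmem 0 (by norm_num) (by norm_num))
    obtain ⟨b1, hb1, hbk1, hc1⟩ := memD hn (by norm_num) (hmem 1 (by norm_num) (by norm_num))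
    obtain ⟨b2, hb2, hbk2, hc2⟩ := memD hn (by norm_num) (hmem 2 (by norm_num) (by norm_num))
    omega


lemma exists_edge (hn : 6 ≤ n) (F : SimpleGraph (ZMod n))
    (hTP : TriviallyPerfect (symmDiff (cycleZ n) F)) (i : ZMod n) :
    ∃ e ∈ winE n i, e ∈ F.edgeSet := by
  by_contra hcon
  push_neg at hcon
  have hno : ∀ u v : ZMod n, s(u, v) ∈ winE n i → ¬ F.Adj u v := fun u v hm hA =>
    hcon _ hm ((SimpleGraph.mem_edgeSet F).mpr hA)
  have hG : ∀ u v : ZMod n, ¬ F.Adj u v →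
      ((symmDiff (cycleZ n) F).Adj u v ↔ (cycleZ n).Adj u v) := by
    intro u v h
    rw [symmDiff_def]
    simp [SimpleGraph.sup_adj, SimpleGraph.sdiff_adj, h]
  have m1 : s(i, i+1) ∈ winE n i := by simp [winE]
  have m2 : s(i+1, i+2) ∈ winE n i := by simp [winE]
  have m3 : s(i+2, i+3) ∈ winE n i := by simp [winE]
  have m4 : s(i, i+2) ∈ winE n i := by simp [winE]
  have m5 : s(i, i+3) ∈ winE n i := by simp [winE]
  have m6 : s(i+1, i+3) ∈ winE n i := by simp [winE]
  refine (hTP i (i+1) (i+2) (i+3)).1 ?_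
  refine ⟨?_, ?_, ?_, ?_, ?_, ?_, ?_, ?_, ?_, ?_, ?_, ?_⟩
  · exact (hG _ _ (hno _ _ m1)).mpr (cyc_adj1 hn i)
  · refine (hG _ _ (hno _ _ m2)).mpr ?_
    have := cyc_adj1 hn (i+1)
    rwa [show i + 1 + 1 = i + 2 by ring] at this
  · refine (hG _ _ (hno _ _ m3)).mpr ?_
    have := cyc_adj1 hn (i+2)
    rwa [show i + 2 + 1 = i + 3 by ring] at this
  · rw [hG _ _ (hno _ _ m4)]
    exact cyc_nadj2 hn i
  · rw [hG _ _ (hno _ _ m5)]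
    exact cyc_nadj3 hn i
  · rw [hG _ _ (hno _ _ m6)]
    have := cyc_nadj2 hn (i+1)
    rwa [show i + 1 + 2 = i + 3 by ring] at this
  · exact fun h => one_ne hn (by linear_combination -h)
  · exact fun h => two_ne hn (by linear_combination -h)
  · exact fun h => three_ne hn (by linear_combination -h)
  · exact fun h => one_ne hn (by linear_combination -h)
  · exact fun h => two_ne hn (by linear_combination -h)
  · exact fun h => one_ne hn (by linear_combination -h)


end CycleTight

/-- An editing set of size exactly `p` for the cycle on `3p`
vertices (`p > 1`) consists of deletions of every third edge of the cycle:
the edges `v_{3i+r} v_{3i+r+1}` for `0 ≤ i < p`, for some fixed offset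
`r ∈ {0, 1, 2}`. -/
theorem cycle_editing_tight (p : ℕ) (hp : 1 < p)
    (F : SimpleGraph (ZMod (3 * p)))
    (hTP : TriviallyPerfect (symmDiff (cycleZ (3 * p)) F))
    (hcard : F.edgeSet.ncard = p) :
    ∃ r : ℕ, r < 3 ∧
      F = SimpleGraph.fromEdgeSet
        {e : Sym2 (ZMod (3 * p)) | ∃ i : ℕ, i < p ∧
          e = s(((3 * i + r : ℕ) : ZMod (3 * p)), ((3 * i + r + 1 : ℕ) : ZMod (3 * p)))} := by
  classical
  have hn : 6 ≤ 3 * p := by omega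
  haveI : NeZero (3 * p) := ⟨by omega⟩
  haveI : Fact (1 < 3 * p) := ⟨by omega⟩
  have hEfin : F.edgeSet.Finite := Set.toFinite _
  set E : Finset (Sym2 (ZMod (3 * p))) := hEfin.toFinset with hE
  have hEcard : E.card = p := by
    rw [hE, ← Set.ncard_eq_toFinset_card _ hEfin, hcard]
  have hwin : ∀ i : ZMod (3 * p), ∃ e, e ∈ CycleTight.winE (3 * p) i ∧ e ∈ E := by
    intro i
    obtain ⟨e, he1, he2⟩ := CycleTight.exists_edge hn F hTP i
    exact ⟨e, he1, hEfin.mem_toFinset.mpr he2⟩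
  choose c hc1 hc2 using hwin
  have hfib : (Finset.univ : Finset (ZMod (3 * p))).card
      = ∑ e ∈ E, (Finset.univ.filter (fun i => c i = e)).card :=
    Finset.card_eq_sum_card_fiberwise (fun i _ => hc2 i)
  have hcardV : (Finset.univ : Finset (ZMod (3 * p))).card = 3 * p := by
    simp [Finset.card_univ, ZMod.card]
  have hfibsub : ∀ e, (Finset.univ.filter (fun i => c i = e)) ⊆ CycleTight.Aset (3 * p) e := by
    intro e i hi
    rw [Finset.mem_filter] at hi
    exact CycleTight.mem_Aset.mpr (hi.2 ▸ hc1 i)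
  have hA3 : ∀ e : Sym2 (ZMod (3 * p)), (CycleTight.Aset (3 * p) e).card ≤ 3 := by
    intro e
    induction e using Sym2.ind with
    | _ x y => exact CycleTight.cardA_le hn x y
  have hub : ∀ e ∈ E, (Finset.univ.filter (fun i => c i = e)).card ≤ 3 :=
    fun e _ => le_trans (Finset.card_le_card (hfibsub e)) (hA3 e)
  have hall3 : ∀ e ∈ E, (Finset.univ.filter (fun i => c i = e)).card = 3 := by
    by_contra hcon
    push_neg at hcon
    obtain ⟨e0, he0, hne⟩ := hcon
    have hlt : ∑ e ∈ E, (Finset.univ.filter (fun i => c i = e)).card < ∑ _e ∈ E, 3 :=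
      Finset.sum_lt_sum (fun e he => hub e he) ⟨e0, he0, lt_of_le_of_ne (hub e0 he0) hne⟩
    rw [Finset.sum_const, smul_eq_mul, hEcard] at hlt
    have : 3 * p < p * 3 := by rw [← hcardV, hfib]; exact hlt
    omega
  have hAeq : ∀ e ∈ E, CycleTight.Aset (3 * p) e = Finset.univ.filter (fun i => c i = e) := by
    intro e he
    exact (Finset.eq_of_subset_of_card_le (hfibsub e) (by rw [hall3 e he]; exact hA3 e)).symm
  have hkey : ∀ e ∈ E, ∀ i, e ∈ CycleTight.winE (3 * p) i → c i = e := by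
    intro e he i hi
    have hmem : i ∈ CycleTight.Aset (3 * p) e := CycleTight.mem_Aset.mpr hi
    rw [hAeq e he, Finset.mem_filter] at hmem
    exact hmem.2
  have huniq : ∀ (i : ZMod (3 * p)) e e', e ∈ E → e' ∈ E →
      e ∈ CycleTight.winE (3 * p) i → e' ∈ CycleTight.winE (3 * p) i → e = e' := by
    intro i e e' he he' h1 h2
    rw [← hkey e he i h1, ← hkey e' he' i h2]
  have hcyc : ∀ e ∈ E, ∃ k : ZMod (3 * p), e = s(k, k + 1) := by
    intro e he
    induction e using Sym2.ind with
    | _ x y =>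
      have h3 : (CycleTight.Aset (3 * p) s(x, y)).card = 3 := by
        rw [hAeq _ he]; exact hall3 _ he
      rcases CycleTight.cardA_eq3 hn x y h3 with hD | hD
      · have h1 := ZMod.natCast_rightInverse (n := 3 * p) (y - x)
        rw [hD] at h1
        have h2 : y = x + 1 := by
          push_cast at h1
          linear_combination -h1
        exact ⟨x, by rw [h2]⟩
      · have h1 := ZMod.natCast_rightInverse (n := 3 * p) (y - x)
        rw [hD] at h1
        have h2 : ((3 * p - 1 : ℕ) : ZMod (3 * p)) = -1 := by
          have h3' : ((3 * p - 1 : ℕ) : ZMod (3 * p)) + 1 = ((3 * p : ℕ) : ZMod (3 * p)) := by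
            rw [← Nat.cast_one (R := ZMod (3 * p)), ← Nat.cast_add,
              Nat.sub_add_cancel (by omega : 1 ≤ 3 * p)]
          rw [ZMod.natCast_self] at h3'
          linear_combination h3'
        rw [h2] at h1
        have h4 : x = y + 1 := by linear_combination h1
        exact ⟨y, by rw [h4]; exact Sym2.eq_swap⟩
  have hm01 : ∀ k : ZMod (3 * p), s(k, k + 1) ∈ CycleTight.winE (3 * p) k := by
    intro k; simp [CycleTight.winE]
  have hm12 : ∀ k : ZMod (3 * p), s(k + 1, k + 2) ∈ CycleTight.winE (3 * p) k := by
    intro k; simp [CycleTight.winE]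
  have hm23 : ∀ k : ZMod (3 * p), s(k + 2, k + 3) ∈ CycleTight.winE (3 * p) k := by
    intro k; simp [CycleTight.winE]
  have hval1 : ∀ k : ZMod (3 * p), (k + 1 - k).val = 1 := by
    intro k
    rw [show k + 1 - k = 1 by ring, ZMod.val_one]
  have hstep : ∀ k : ZMod (3 * p), s(k, k + 1) ∈ E → s(k + 3, k + 3 + 1) ∈ E := by
    intro k hk
    obtain ⟨m, hm⟩ := hcyc _ (hc2 (k + 1))
    have hmE : s(m, m + 1) ∈ E := hm ▸ hc2 (k + 1)
    have hmW : s(m, m + 1) ∈ CycleTight.winE (3 * p) (k + 1) := hm ▸ hc1 (k + 1)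
    have hmA : (k + 1) ∈ CycleTight.Aset (3 * p) s(m, m + 1) := CycleTight.mem_Aset.mpr hmW
    have hsub := CycleTight.Aset_subset hn m (m + 1) hmA
    obtain ⟨j, hj, hjm⟩ := Finset.mem_image.mp hsub
    rw [Finset.mem_range] at hj
    have hv1 := hval1 m
    interval_cases j
    · exfalso
      have hm' : m = k + 1 := by
        push_cast at hjm
        linear_combination hjm
      have h1 : s(m, m + 1) ∈ CycleTight.winE (3 * p) k := by
        rw [hm', show k + 1 + 1 = k + 2 by ring]
        exact hm12 k
      have heq := huniq k _ _ hk hmE (hm01 k) h1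
      rw [hm'] at heq
      rw [Sym2.eq_iff] at heq
      rcases heq with ⟨h1', h2'⟩ | ⟨h1', h2'⟩
      · exact CycleTight.one_ne hn (by linear_combination -h1')
      · exact CycleTight.two_ne hn (by linear_combination -h1')
    · exfalso
      have hm' : m = k + 2 := by
        push_cast at hjm
        linear_combination hjm
      have h1 : s(m, m + 1) ∈ CycleTight.winE (3 * p) k := by
        rw [hm', show k + 2 + 1 = k + 3 by ring]
        exact hm23 k
      have heq := huniq k _ _ hk hmE (hm01 k) h1
      rw [hm'] at heq
      rw [Sym2.eq_iff] at heq
      rcases heq with ⟨h1', h2'⟩ | ⟨h1', h2'⟩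
      · exact CycleTight.two_ne hn (by linear_combination -h1')
      · exact CycleTight.three_ne hn (by linear_combination -h1')
    · have hm' : k + 3 = m := by
        push_cast at hjm
        linear_combination -hjm
      rw [hm']
      exact hmE
    · exfalso
      have hmA3 : m - ((3 : ℕ) : ZMod (3 * p)) ∈ CycleTight.Aset (3 * p) s(m, m + 1) := by
        rw [hjm]; exact hmA
      obtain ⟨b, hb, hbk, hcb⟩ := CycleTight.memD hn (by norm_num) hmA3
      omega
  have hEne : E.Nonempty := by
    rw [← Finset.card_pos, hEcard]; omega
  obtain ⟨e₀, he₀⟩ := hEne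
  obtain ⟨k₀, hk₀⟩ := hcyc e₀ he₀
  have hk₀E : s(k₀, k₀ + 1) ∈ E := hk₀ ▸ he₀
  have hiter : ∀ t : ℕ, s(k₀ + ((3 * t : ℕ) : ZMod (3 * p)), k₀ + ((3 * t : ℕ) : ZMod (3 * p)) + 1) ∈ E := by
    intro t
    induction t with
    | zero => simpa using hk₀E
    | succ t ih =>
      have hst := hstep _ ih
      have harg : k₀ + ((3 * (t + 1) : ℕ) : ZMod (3 * p))
          = k₀ + ((3 * t : ℕ) : ZMod (3 * p)) + 3 := by
        push_cast; ring
      rw [harg]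
      exact hst
  have hinj : Set.InjOn (fun t : ℕ => k₀ + ((3 * t : ℕ) : ZMod (3 * p))) (Finset.range p) := by
    intro t1 h1 t2 h2 h
    simp only [Finset.coe_range, Set.mem_Iio] at h1 h2
    have hcl := add_left_cancel h
    have h3 := congrArg ZMod.val hcl
    rw [ZMod.val_cast_of_lt (by omega), ZMod.val_cast_of_lt (by omega)] at h3
    omega
  set T := (Finset.range p).image (fun t : ℕ => k₀ + ((3 * t : ℕ) : ZMod (3 * p))) with hT
  have hTcard : T.card = p := by
    rw [hT, Finset.card_image_of_injOn hinj, Finset.card_range]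
  set S := Finset.univ.filter (fun k : ZMod (3 * p) => s(k, k + 1) ∈ E) with hS
  have hTS : T ⊆ S := by
    intro z hz
    obtain ⟨t, ht, rfl⟩ := Finset.mem_image.mp hz
    exact Finset.mem_filter.mpr ⟨Finset.mem_univ _, hiter t⟩
  have hSinj : Set.InjOn (fun k : ZMod (3 * p) => s(k, k + 1)) S := by
    intro a _ b _ h
    simp only [Sym2.eq_iff] at h
    rcases h with ⟨h1, _⟩ | ⟨h1, h2⟩
    · exact h1
    · exact absurd (show (2 : ZMod (3 * p)) = 0 by linear_combination h2 - h1)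
        (CycleTight.two_ne hn)
  have hSE : S.image (fun k : ZMod (3 * p) => s(k, k + 1)) = E := by
    apply Finset.Subset.antisymm
    · intro e he
      obtain ⟨k, hk, rfl⟩ := Finset.mem_image.mp he
      exact (Finset.mem_filter.mp hk).2
    · intro e he
      obtain ⟨k, rfl⟩ := hcyc e he
      exact Finset.mem_image.mpr ⟨k, Finset.mem_filter.mpr ⟨Finset.mem_univ _, he⟩, rfl⟩
  have hScard : S.card = p := by
    have hEcard' := hEcard
    rw [← hSE, Finset.card_image_of_injOn hSinj] at hEcard'
    exact hEcard'
  have hTSeq : T = S := Finset.eq_of_subset_of_card_le hTS (by rw [hTcard, hScard])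
  have hrlt : k₀.val % 3 < 3 := Nat.mod_lt _ (by norm_num)
  refine ⟨k₀.val % 3, hrlt, ?_⟩
  set r := k₀.val % 3 with hr
  have h3dvd : (3 : ℕ) ∣ 3 * p := ⟨p, rfl⟩
  have hSval : ∀ z : ZMod (3 * p), z ∈ S ↔ z.val % 3 = r := by
    intro z
    constructor
    · intro hz
      rw [← hTSeq] at hz
      obtain ⟨t, ht, rfl⟩ := Finset.mem_image.mp hz
      rw [ZMod.val_add, ZMod.val_natCast, Nat.mod_mod_of_dvd _ h3dvd]
      have hu : (3 * t) % (3 * p) % 3 = 0 := by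
        rw [Nat.mod_mod_of_dvd _ h3dvd, Nat.mul_mod_right]
      generalize (3 * t) % (3 * p) = u at hu ⊢
      omega
    · intro hz
      set d := (z - k₀).val with hd
      have hcast : ((d : ℕ) : ZMod (3 * p)) = z - k₀ := ZMod.natCast_rightInverse _
      have hzd : z = k₀ + ((d : ℕ) : ZMod (3 * p)) := by
        rw [hcast]; ring
      have hdlt : d < 3 * p := ZMod.val_lt _
      have h1 : z.val = (k₀.val + d) % (3 * p) := by
        conv_lhs => rw [hzd]
        rw [ZMod.val_add, ZMod.val_natCast, Nat.mod_eq_of_lt hdlt]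
      have h2 : z.val % 3 = (k₀.val + d) % 3 := by
        rw [h1, Nat.mod_mod_of_dvd _ h3dvd]
      have hdmod : d % 3 = 0 := by omega
      rw [← hTSeq]
      refine Finset.mem_image.mpr ⟨d / 3, Finset.mem_range.mpr (by omega), ?_⟩
      show k₀ + ((3 * (d / 3) : ℕ) : ZMod (3 * p)) = z
      rw [show 3 * (d / 3) = d by omega]
      exact hzd.symm
  ext u v
  rw [SimpleGraph.fromEdgeSet_adj, Set.mem_setOf_eq]
  constructor
  · intro h
    have huvE : s(u, v) ∈ E := hEfin.mem_toFinset.mpr ((SimpleGraph.mem_edgeSet F).mpr h)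
    obtain ⟨k, hk⟩ := hcyc _ huvE
    have hkS : k ∈ S := Finset.mem_filter.mpr ⟨Finset.mem_univ _, hk ▸ huvE⟩
    have hkr : k.val % 3 = r := (hSval k).mp hkS
    have hkvlt := ZMod.val_lt k
    refine ⟨⟨k.val / 3, by omega, ?_⟩, h.ne⟩
    have hkval : ((3 * (k.val / 3) + r : ℕ) : ZMod (3 * p)) = k := by
      rw [show 3 * (k.val / 3) + r = k.val by omega]
      exact ZMod.natCast_rightInverse k
    have hkval1 : ((3 * (k.val / 3) + r + 1 : ℕ) : ZMod (3 * p)) = k + 1 := by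
      rw [show (3 * (k.val / 3) + r + 1 : ℕ) = (3 * (k.val / 3) + r) + 1 from rfl,
        Nat.cast_add, Nat.cast_one, hkval]
    rw [hk]
    exact Sym2.eq_iff.mpr (Or.inl ⟨hkval.symm, hkval1.symm⟩)
  · rintro ⟨⟨i, hip, heq⟩, hne⟩
    have hkr : (((3 * i + r : ℕ) : ZMod (3 * p))).val % 3 = r := by
      rw [ZMod.val_cast_of_lt (by omega)]
      omega
    have hkS : ((3 * i + r : ℕ) : ZMod (3 * p)) ∈ S := (hSval _).mpr hkr
    have hkE : s(((3 * i + r : ℕ) : ZMod (3 * p)), ((3 * i + r : ℕ) : ZMod (3 * p)) + 1) ∈ E :=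
      (Finset.mem_filter.mp hkS).2
    have heq2 : s(u, v) = s(((3 * i + r : ℕ) : ZMod (3 * p)), ((3 * i + r : ℕ) : ZMod (3 * p)) + 1) := by
      rw [heq]
      refine Sym2.eq_iff.mpr (Or.inl ⟨rfl, ?_⟩)
      push_cast
      ring
    have huvE : s(u, v) ∈ E := heq2 ▸ hkE
    exact (SimpleGraph.mem_edgeSet F).mp (hEfin.mem_toFinset.mp huvE)
end

section
/- Let H be the subdivided claw: the star K_{1,3} with each edge subdivided once (7 vertices: a center v, three middle vertices a₁, b₁, c₁ adjacent to v, and three leaves a₂, b₂, c₂ with aᵢ₂ adjacent only to aᵢ₁, etc.). If F is an editing set for H (H △ F is trivially perfect), then |F| ≥ 2. Moreover, if |F| = 2 then F consists of deletions of two of the three edges incident to the center v. -/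
/-- The subdivided claw: center `0`, middle vertices `1, 2, 3`, leaves
`4, 5, 6` (leaf `i + 3` attached to middle vertex `i`). -/
def subdividedClaw : SimpleGraph (Fin 7) :=
  SimpleGraph.fromEdgeSet {s(0, 1), s(0, 2), s(0, 3), s(1, 4), s(2, 5), s(3, 6)}

open SimpleGraph

/-! ### Boolean adjacency machinery -/

def clawB (a b : Nat) : Bool :=
  (a == 0 && (b == 1 || b == 2 || b == 3)) || (b == 0 && (a == 1 || a == 2 || a == 3)) ||
  (a == 1 && b == 4) || (b == 1 && a == 4) ||
  (a == 2 && b == 5) || (b == 2 && a == 5) ||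
  (a == 3 && b == 6) || (b == 3 && a == 6)

def pairB (x1 y1 x2 y2 a b : Nat) : Bool :=
  !(a == b) &&
  ((a == x1 && b == y1) || (a == y1 && b == x1) || (a == x2 && b == y2) || (a == y2 && b == x2))

def gB (x1 y1 x2 y2 a b : Nat) : Bool := xor (clawB a b) (pairB x1 y1 x2 y2 a b)

def okB (x y : Nat) : Bool :=
  (x == 0 && (y == 1 || y == 2 || y == 3)) || (y == 0 && (x == 1 || x == 2 || x == 3))

def p4B (x1 y1 x2 y2 a b c d : Nat) : Bool :=
  gB x1 y1 x2 y2 a b && gB x1 y1 x2 y2 b c && gB x1 y1 x2 y2 c d &&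
  !gB x1 y1 x2 y2 a c && !gB x1 y1 x2 y2 a d && !gB x1 y1 x2 y2 b d &&
  !(a == b) && !(a == c) && !(a == d) && !(b == c) && !(b == d) && !(c == d)

def c4B (x1 y1 x2 y2 a b c d : Nat) : Bool :=
  gB x1 y1 x2 y2 a b && gB x1 y1 x2 y2 b c && gB x1 y1 x2 y2 c d && gB x1 y1 x2 y2 d a &&
  !gB x1 y1 x2 y2 a c && !gB x1 y1 x2 y2 b d &&
  !(a == b) && !(a == c) && !(a == d) && !(b == c) && !(b == d) && !(c == d)

def witList : List (Fin 7 × Fin 7 × Fin 7 × Fin 7) :=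
  [(3, 0, 1, 4), (1, 0, 2, 5), (6, 3, 0, 2), (4, 1, 0, 2), (3, 0, 2, 5),
   (1, 0, 3, 6), (5, 2, 3, 6), (4, 1, 3, 6), (5, 2, 1, 4)]

def badB (x1 y1 x2 y2 : Nat) : Bool :=
  witList.any fun q =>
    p4B x1 y1 x2 y2 q.1.val q.2.1.val q.2.2.1.val q.2.2.2.val ||
    c4B x1 y1 x2 y2 q.1.val q.2.1.val q.2.2.1.val q.2.2.2.val

def allN (f : Nat → Bool) : Nat → Bool
  | 0 => true
  | n + 1 => f n && allN f n

lemma allN_sound (f : Nat → Bool) : ∀ n : Nat, allN f n = true → ∀ i, i < n → f i = true := by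
  intro n
  induction n with
  | zero => intro _ i hi; omega
  | succ n ih =>
    intro h i hi
    rw [allN, Bool.and_eq_true] at h
    rcases Nat.lt_succ_iff_lt_or_eq.mp hi with h' | rfl
    · exact ih h.2 i h'
    · exact h.1

/-! ### The two computational facts -/

set_option maxHeartbeats 8000000 in
theorem check1 : allN (fun x => allN (fun y => badB x y x y) 7) 7 = true := by decide

set_option maxHeartbeats 32000000 in
theorem check2 :
    allN (fun x1 => allN (fun y1 => allN (fun x2 => allN (fun y2 =>
      (okB x1 y1 && okB x2 y2) || badB x1 y1 x2 y2) 7) 7) 7) 7 = true := by decide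

/-! ### Decidability instances for bridging -/

instance instDecClaw : DecidableRel subdividedClaw.Adj := fun a b =>
  decidable_of_iff (s(a, b) ∈
      ({s(0, 1), s(0, 2), s(0, 3), s(1, 4), s(2, 5), s(3, 6)} : Set (Sym2 (Fin 7))) ∧ a ≠ b) (by
    rw [subdividedClaw, SimpleGraph.fromEdgeSet_adj])

/-! ### Bridging lemmas -/

lemma clawP : ∀ a b : Fin 7, subdividedClaw.Adj a b ↔ clawB a.val b.val = true := by decide

lemma pairP (x1 y1 x2 y2 a b : Fin 7) :
    (fromEdgeSet ({s(x1, y1), s(x2, y2)} : Set (Sym2 (Fin 7)))).Adj a b ↔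
      pairB x1.val y1.val x2.val y2.val a.val b.val = true := by
  rw [SimpleGraph.fromEdgeSet_adj]
  simp only [Set.mem_insert_iff, Set.mem_singleton_iff, Sym2.eq, Sym2.rel_iff',
    Prod.mk.injEq, Prod.swap_prod_mk, pairB, Bool.and_eq_true, Bool.or_eq_true,
    Bool.not_eq_true', beq_iff_eq, beq_eq_false_iff_ne, ne_eq, Fin.val_eq_val]
  tauto

lemma adj_iff (x1 y1 x2 y2 a b : Fin 7) :
    (symmDiff subdividedClaw (fromEdgeSet ({s(x1, y1), s(x2, y2)} : Set (Sym2 (Fin 7))))).Adj a b ↔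
      gB x1.val y1.val x2.val y2.val a.val b.val = true := by
  rw [symmDiff_def, SimpleGraph.sup_adj, SimpleGraph.sdiff_adj, SimpleGraph.sdiff_adj,
    clawP a b, pairP x1 y1 x2 y2 a b, gB]
  cases hc : clawB a.val b.val <;> cases hp : pairB x1.val y1.val x2.val y2.val a.val b.val <;>
    simp

lemma nadj_of (x1 y1 x2 y2 a b : Fin 7)
    (h : gB x1.val y1.val x2.val y2.val a.val b.val = false) :
    ¬(symmDiff subdividedClaw
        (fromEdgeSet ({s(x1, y1), s(x2, y2)} : Set (Sym2 (Fin 7))))).Adj a b := by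
  rw [adj_iff]; simp [h]

lemma ne_of {a b : Fin 7} (h : (a.val == b.val) = false) : a ≠ b := by
  rintro rfl; simp at h

lemma p4_sound (x1 y1 x2 y2 a b c d : Fin 7)
    (h : p4B x1.val y1.val x2.val y2.val a.val b.val c.val d.val = true) :
    IsInducedP4 (symmDiff subdividedClaw
      (fromEdgeSet ({s(x1, y1), s(x2, y2)} : Set (Sym2 (Fin 7))))) a b c d := by
  unfold p4B at h
  simp only [Bool.and_eq_true, Bool.not_eq_true'] at h
  obtain ⟨⟨⟨⟨⟨⟨⟨⟨⟨⟨⟨h1, h2⟩, h3⟩, h4⟩, h5⟩, h6⟩, h7⟩, h8⟩, h9⟩, h10⟩, h11⟩, h12⟩ := h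
  exact ⟨(adj_iff _ _ _ _ _ _).mpr h1, (adj_iff _ _ _ _ _ _).mpr h2,
    (adj_iff _ _ _ _ _ _).mpr h3, nadj_of _ _ _ _ _ _ h4, nadj_of _ _ _ _ _ _ h5,
    nadj_of _ _ _ _ _ _ h6, ne_of h7, ne_of h8, ne_of h9, ne_of h10, ne_of h11, ne_of h12⟩

lemma c4_sound (x1 y1 x2 y2 a b c d : Fin 7)
    (h : c4B x1.val y1.val x2.val y2.val a.val b.val c.val d.val = true) :
    IsInducedC4 (symmDiff subdividedClaw
      (fromEdgeSet ({s(x1, y1), s(x2, y2)} : Set (Sym2 (Fin 7))))) a b c d := by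
  unfold c4B at h
  simp only [Bool.and_eq_true, Bool.not_eq_true'] at h
  obtain ⟨⟨⟨⟨⟨⟨⟨⟨⟨⟨⟨h1, h2⟩, h3⟩, h4⟩, h5⟩, h6⟩, h7⟩, h8⟩, h9⟩, h10⟩, h11⟩, h12⟩ := h
  exact ⟨(adj_iff _ _ _ _ _ _).mpr h1, (adj_iff _ _ _ _ _ _).mpr h2,
    (adj_iff _ _ _ _ _ _).mpr h3, (adj_iff _ _ _ _ _ _).mpr h4, nadj_of _ _ _ _ _ _ h5,
    nadj_of _ _ _ _ _ _ h6, ne_of h7, ne_of h8, ne_of h9, ne_of h10, ne_of h11, ne_of h12⟩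

lemma badB_sound (x1 y1 x2 y2 : Fin 7) (h : badB x1.val y1.val x2.val y2.val = true) :
    ¬TriviallyPerfect (symmDiff subdividedClaw
      (fromEdgeSet ({s(x1, y1), s(x2, y2)} : Set (Sym2 (Fin 7))))) := by
  intro hTP
  unfold badB at h
  rw [List.any_eq_true] at h
  obtain ⟨⟨a, b, c, d⟩, -, hq⟩ := h
  rw [Bool.or_eq_true] at hq
  rcases hq with hq | hq
  · exact (hTP a b c d).1 (p4_sound x1 y1 x2 y2 a b c d hq)
  · exact (hTP a b c d).2 (c4_sound x1 y1 x2 y2 a b c d hq)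

lemma okB_mem : ∀ x y : Fin 7, okB x.val y.val = true →
    s(x, y) ∈ ({s(0, 1), s(0, 2), s(0, 3)} : Set (Sym2 (Fin 7))) := by decide

/-- Any editing set of the subdivided claw has size at least 2;
if it has size exactly 2, it consists of deletions of two of the three edges
incident to the center. -/
theorem subdividedClaw_editing (F : SimpleGraph (Fin 7))
    (hTP : TriviallyPerfect (symmDiff subdividedClaw F)) :
    2 ≤ F.edgeSet.ncard ∧
      (F.edgeSet.ncard = 2 →
        F.edgeSet ⊆ {s(0, 1), s(0, 2), s(0, 3)}) := by
  have key : ∀ x1 y1 x2 y2 : Fin 7,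
      F = fromEdgeSet ({s(x1, y1), s(x2, y2)} : Set (Sym2 (Fin 7))) →
      badB x1.val y1.val x2.val y2.val = true → False := fun x1 y1 x2 y2 hF hb =>
    badB_sound x1 y1 x2 y2 hb (hF ▸ hTP)
  have hb1 : ∀ x y : Fin 7, badB x.val y.val x.val y.val = true := fun x y =>
    allN_sound _ 7 (allN_sound _ 7 check1 x.val x.isLt) y.val y.isLt
  constructor
  · by_contra hlt
    push_neg at hlt
    have h1 : F.edgeSet.ncard ≤ 1 := by omega
    rcases (Set.ncard_le_one_iff_eq (Set.toFinite _)).mp h1 with h0 | ⟨e, he⟩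
    · have hF : F = fromEdgeSet ({s((0 : Fin 7), 0), s(0, 0)} : Set (Sym2 (Fin 7))) := by
        rw [SimpleGraph.edgeSet_eq_empty.mp h0]
        ext a b
        rw [SimpleGraph.fromEdgeSet_adj]
        simp only [SimpleGraph.bot_adj, Set.mem_insert_iff, Set.mem_singleton_iff, Sym2.eq,
          Sym2.rel_iff', Prod.mk.injEq, Prod.swap_prod_mk, ne_eq, false_iff]
        rintro ⟨h, hne⟩
        apply hne
        rcases h with (⟨rfl, rfl⟩ | ⟨rfl, rfl⟩) | (⟨rfl, rfl⟩ | ⟨rfl, rfl⟩) <;> rfl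
      exact key 0 0 0 0 hF (hb1 0 0)
    · obtain ⟨⟨x, y⟩, rfl⟩ := e.exists_rep
      have he' : F.edgeSet = ({s(x, y)} : Set (Sym2 (Fin 7))) := he
      have hF : F = fromEdgeSet ({s(x, y), s(x, y)} : Set (Sym2 (Fin 7))) := by
        rw [Set.pair_eq_singleton, ← he', SimpleGraph.fromEdgeSet_edgeSet]
      exact absurd (key x y x y hF (hb1 x y)) not_false
  · intro h2
    by_contra hsub
    obtain ⟨e1, e2, hne, hset⟩ := Set.ncard_eq_two.mp h2
    obtain ⟨⟨x1, y1⟩, rfl⟩ := e1.exists_rep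
    obtain ⟨⟨x2, y2⟩, rfl⟩ := e2.exists_rep
    have hset' : F.edgeSet = ({s(x1, y1), s(x2, y2)} : Set (Sym2 (Fin 7))) := hset
    have hF : F = fromEdgeSet ({s(x1, y1), s(x2, y2)} : Set (Sym2 (Fin 7))) := by
      rw [← SimpleGraph.fromEdgeSet_edgeSet F, hset']
    have hcheck : ((okB x1.val y1.val && okB x2.val y2.val) ||
        badB x1.val y1.val x2.val y2.val) = true :=
      allN_sound _ 7 (allN_sound _ 7 (allN_sound _ 7 (allN_sound _ 7 check2
        x1.val x1.isLt) y1.val y1.isLt) x2.val x2.isLt) y2.val y2.isLt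
    rw [Bool.or_eq_true] at hcheck
    rcases hcheck with h | h
    · rw [Bool.and_eq_true] at h
      exact hsub (hset' ▸ Set.insert_subset (okB_mem x1 y1 h.1)
        (Set.singleton_subset_iff.mpr (okB_mem x2 y2 h.2)))
    · exact key x1 y1 x2 y2 hF h
end

section
/- Let G be a graph, X ⊆ V(G), and suppose no set W of four vertices with |W ∩ X| ≤ 1 induces a P₄ or C₄ in G. Let u, v, w ∈ V(G) \ X with uv, uw ∈ E(G) and vw ∉ E(G). Then N(v) ∩ X ⊆ N(u) ∩ X. -/
/-- If no 4-vertex set meeting `X` in at most one vertex induces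
a `P₄` or a `C₄`, and `u, v, w ∉ X` with `uv, uw ∈ E`, `vw ∉ E`, then
`N(v) ∩ X ⊆ N(u) ∩ X`. -/
theorem xNeighborhood_subset_of_prec {V : Type*} (G : SimpleGraph V) (X : Set V)
    (hX : ∀ a b c d : V, (({a, b, c, d} : Set V) ∩ X).ncard ≤ 1 →
      ¬IsInducedP4 G a b c d ∧ ¬IsInducedC4 G a b c d)
    (u v w : V) (hu : u ∉ X) (hv : v ∉ X) (hw : w ∉ X)
    (huvw : u ≠ v ∧ u ≠ w ∧ v ≠ w)
    (huv : G.Adj u v) (huw : G.Adj u w) (hvw : ¬G.Adj v w) :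
    G.neighborSet v ∩ X ⊆ G.neighborSet u ∩ X := by
  rintro x ⟨hvx, hxX⟩
  have hxv : G.Adj x v := (SimpleGraph.mem_neighborSet ..).mp hvx |>.symm
  refine ⟨?_, hxX⟩
  by_contra hxu
  have hxu : ¬G.Adj x u := fun h => hxu h.symm
  obtain ⟨huv', huw', hvw'⟩ := huvw
  have hxne : x ≠ u := fun h => hu (h ▸ hxX)
  have hxnv : x ≠ v := fun h => hv (h ▸ hxX)
  have hxnw : x ≠ w := fun h => hw (h ▸ hxX)
  have hset : (({x, v, u, w} : Set V) ∩ X).ncard ≤ 1 := by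
    have : (({x, v, u, w} : Set V) ∩ X) = {x} := by
      ext y
      simp only [Set.mem_inter_iff, Set.mem_insert_iff, Set.mem_singleton_iff]
      constructor
      · rintro ⟨(rfl | rfl | rfl | rfl), hy⟩ <;> first | rfl | exact absurd hy (by assumption)
      · rintro rfl; exact ⟨Or.inl rfl, hxX⟩
    rw [this, Set.ncard_singleton]
  obtain ⟨hP4, hC4⟩ := hX x v u w hset
  by_cases hxw : G.Adj x w
  · exact hC4 ⟨hxv, huv.symm, huw, hxw.symm, hxu, hvw, hxnv, hxne, hxnw,
      fun h => huv' h.symm, hvw', huw'⟩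
  · exact hP4 ⟨hxv, huv.symm, huw, hxu, hxw, hvw, hxnv, hxne, hxnw,
      fun h => huv' h.symm, hvw', huw'⟩
end

section
/- Let T be a rooted tree, M ⊆ V(T), and let M' be the LCA-closure of M (the smallest superset of M closed under taking least common ancestors of pairs of its elements). Then |M'| ≤ 2|M|, and every connected component C of T − M' satisfies |N_T(C)| ≤ 2. -/
set_option linter.unusedSectionVars false

open SimpleGraph

section Aux
variable {V : Type*} [Fintype V] [PartialOrder V] [OrderBot V]

lemma glb_le_left {a b c : V} (h : IsGLB {a, b} c) : c ≤ a :=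
  h.1 (Set.mem_insert a {b})

lemma glb_le_right {a b c : V} (h : IsGLB {a, b} c) : c ≤ b :=
  h.1 (Set.mem_insert_of_mem a rfl)

lemma le_glb {a b c z : V} (h : IsGLB {a, b} c) (h1 : z ≤ a) (h2 : z ≤ b) : z ≤ c :=
  h.2 (by rintro x (rfl | rfl) <;> assumption)

lemma glb_pair_self {a c : V} (h : IsGLB {a, a} c) : c = a := by
  rw [Set.pair_eq_singleton] at h
  exact h.unique isGLB_singleton

lemma isGLB_pair_of_le {a b : V} (h : b ≤ a) : IsGLB {a, b} b :=
  ⟨by rintro x (rfl | rfl) <;> [exact h; exact le_rfl],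
   fun z hz => hz (Set.mem_insert_of_mem a rfl)⟩

lemma comp_below (htree : ∀ v : V, IsChain (· ≤ ·) {u : V | u ≤ v}) {a x y : V} (hx : x ≤ a) (hy : y ≤ a) : x ≤ y ∨ y ≤ x := by
  rcases eq_or_ne x y with rfl | hne
  · exact Or.inl le_rfl
  · exact htree a hx hy hne

lemma exists_glb (htree : ∀ v : V, IsChain (· ≤ ·) {u : V | u ≤ v}) (a b : V) : ∃ c, IsGLB {a, b} c := by
  have hne : (lowerBounds ({a, b} : Set V)).Nonempty := ⟨⊥, fun x _ => bot_le⟩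
  obtain ⟨c, hc, hmax⟩ :=
    Set.Finite.exists_maximalFor id (lowerBounds ({a, b} : Set V)) (Set.toFinite _) hne
  refine ⟨c, hc, fun z hz => ?_⟩
  have h1 : c ≤ a := hc (Set.mem_insert a {b})
  have h2 : z ≤ a := hz (Set.mem_insert a {b})
  rcases comp_below htree h2 h1 with h | h
  · exact h
  · exact hmax hz h

lemma uniq_parent (htree : ∀ v : V, IsChain (· ≤ ·) {u : V | u ≤ v}) {x y c : V} (hx : x ⋖ c) (hy : y ⋖ c) : x = y := by
  rcases comp_below htree hx.le hy.le with h | h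
  · by_contra hne
    exact hx.2 (h.lt_of_ne hne) hy.lt
  · by_contra hne
    exact hy.2 (h.lt_of_ne (Ne.symm hne)) hx.lt

lemma closure_card (htree : ∀ v : V, IsChain (· ≤ ·) {u : V | u ≤ v}) (M : Set V) :
    ∃ S : Set V, M ⊆ S ∧ (∀ a ∈ S, ∀ b ∈ S, ∀ c : V, IsGLB {a, b} c → c ∈ S) ∧
      S.ncard ≤ 2 * M.ncard := by
  refine Set.Finite.induction_on
    (motive := fun s _ => ∃ S : Set V, s ⊆ S ∧
      (∀ a ∈ S, ∀ b ∈ S, ∀ c : V, IsGLB {a, b} c → c ∈ S) ∧ S.ncard ≤ 2 * s.ncard)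
    M (Set.toFinite M) ⟨∅, le_rfl, fun a ha => absurd ha (Set.notMem_empty a), by simp⟩ ?_
  intro a s ha hsfin IH
  · obtain ⟨S, hMS, hcl, hcard⟩ := IH
    have hins : (insert a s).ncard = s.ncard + 1 := Set.ncard_insert_of_notMem ha hsfin
    rcases S.eq_empty_or_nonempty with rfl | ⟨m₀, hm₀⟩
    · refine ⟨{a}, ?_, ?_, ?_⟩
      · intro x hx
        rcases hx with rfl | hx
        · exact rfl
        · exact absurd (hMS hx) (Set.notMem_empty x)
      · intro p hp q hq c hc
        rcases hp with rfl; rcases hq with rfl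
        exact glb_pair_self hc
      · simp [hins]; omega
    · obtain ⟨c₀, hc₀⟩ := exists_glb htree a m₀
      set A : Set V := {c : V | ∃ m ∈ S, IsGLB {a, m} c} with hA
      have hAne : A.Nonempty := ⟨c₀, m₀, hm₀, hc₀⟩
      obtain ⟨y, hyA, ymax⟩ := Set.Finite.exists_maximalFor id A (Set.toFinite _) hAne
      obtain ⟨my, hmy, hy⟩ := hyA
      have hya : y ≤ a := glb_le_left hy
      have hym : y ≤ my := glb_le_right hy
      have hyAmax : ∀ c ∈ A, c ≤ y := by
        intro c hc
        obtain ⟨m, hm, hglb⟩ := hc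
        rcases comp_below htree (glb_le_left hglb) hya with h | h
        · exact h
        · exact ymax ⟨m, hm, hglb⟩ h
      have K : ∀ m ∈ S, ∀ c, IsGLB {a, m} c → c = y ∨ c ∈ S := by
        intro m hm c hc
        have hcy : c ≤ y := hyAmax c ⟨m, hm, hc⟩
        obtain ⟨d, hd⟩ := exists_glb htree my m
        rcases comp_below htree (glb_le_left hd) hym with h | h
        · have h1 : d ≤ c := le_glb hc (h.trans hya) (glb_le_right hd)
          have h2 : c ≤ d := le_glb hd (hcy.trans hym) (glb_le_right hc)
          exact Or.inr ((le_antisymm h1 h2) ▸ hcl my hmy m hm d hd)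
        · exact Or.inl (le_antisymm hcy (le_glb hc hya (h.trans (glb_le_right hd))))
      have K2 : ∀ m ∈ S, ∀ c, IsGLB {y, m} c → c = y ∨ c ∈ S := by
        intro m hm c hc
        obtain ⟨c', hc'⟩ := exists_glb htree a m
        have hcy : c ≤ y := glb_le_left hc
        have h1 : c ≤ c' := le_glb hc' (hcy.trans hya) (glb_le_right hc)
        rcases comp_below htree (glb_le_left hc') hya with h | h
        · have h2 : c' ≤ c := le_glb hc h (glb_le_right hc')
          have he : c = c' := le_antisymm h1 h2
          rcases K m hm c' hc' with h3 | h3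
          · exact Or.inl (he.trans h3)
          · exact Or.inr (he ▸ h3)
        · exact Or.inl (le_antisymm hcy (le_glb hc le_rfl (h.trans (glb_le_right hc'))))
      refine ⟨insert a (insert y S), ?_, ?_, ?_⟩
      · intro x hx
        rcases hx with rfl | hx
        · exact Set.mem_insert x _
        · exact Set.mem_insert_of_mem _ (Set.mem_insert_of_mem _ (hMS hx))
      · intro p hp q hq c hc
        have memS' : ∀ {z : V}, z = y ∨ z ∈ S → z ∈ insert a (insert y S) := by
          rintro z (rfl | hz)
          · exact Set.mem_insert_of_mem _ (Set.mem_insert z S)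
          · exact Set.mem_insert_of_mem _ (Set.mem_insert_of_mem _ hz)
        rcases hp with rfl | rfl | hp <;> rcases hq with rfl | rfl | hq
        · exact (glb_pair_self hc) ▸ Set.mem_insert _ _
        · exact memS' (Or.inl (hc.unique (isGLB_pair_of_le hya)))
        · exact memS' (K q hq c hc)
        · rw [Set.pair_comm] at hc
          exact memS' (Or.inl (hc.unique (isGLB_pair_of_le hya)))
        · exact memS' (Or.inl (glb_pair_self hc))
        · exact memS' (K2 q hq c hc)
        · rw [Set.pair_comm] at hc
          exact memS' (K p hp c hc)
        · rw [Set.pair_comm] at hc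
          exact memS' (K2 p hp c hc)
        · exact memS' (Or.inr (hcl p hp q hq c hc))
      · calc (insert a (insert y S)).ncard ≤ (insert y S).ncard + 1 := Set.ncard_insert_le _ _
          _ ≤ S.ncard + 1 + 1 := by
              have := Set.ncard_insert_le y S
              omega
          _ ≤ 2 * (insert a s).ncard := by rw [hins]; omega

variable {G : SimpleGraph V}

lemma walk_glb_mem (htree : ∀ v : V, IsChain (· ≤ ·) {u : V | u ≤ v})
    (hG : ∀ u v : V, G.Adj u v ↔ (u ⋖ v ∨ v ⋖ u)) {u v : V} (p : G.Walk u v) :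
    ∀ g : V, IsGLB {u, v} g → g ∈ p.support := by
  induction p with
  | nil =>
    intro g hg
    simp [glb_pair_self hg]
  | @cons a b c h q ih =>
    intro g hg
    obtain ⟨g1, hg1⟩ := exists_glb htree b c
    have hg1mem := ih g1 hg1
    have hgu : g ≤ a := glb_le_left hg
    have hgv : g ≤ c := glb_le_right hg
    rcases (hG a b).1 h with hc | hc
    · -- a ⋖ b
      rcases comp_below htree (glb_le_left hg1) hc.le with h1 | h1
      · have h2 : g1 ≤ g := le_glb hg h1 (glb_le_right hg1)
        have he : g = g1 := le_antisymm (le_glb hg1 (hgu.trans hc.le) hgv) h2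
        rw [Walk.support_cons]
        exact List.mem_cons_of_mem _ (he ▸ hg1mem)
      · have huv : a ≤ c := h1.trans (glb_le_right hg1)
        have he : g = a := le_antisymm hgu (le_glb hg le_rfl huv)
        rw [Walk.support_cons, he]
        exact List.mem_cons_self
    · -- b ⋖ a
      by_cases hgw : g ≤ b
      · have he : g = g1 := le_antisymm (le_glb hg1 hgw hgv)
          (le_glb hg ((glb_le_left hg1).trans hc.le) (glb_le_right hg1))
        rw [Walk.support_cons]
        exact List.mem_cons_of_mem _ (he ▸ hg1mem)
      · rcases comp_below htree hgu hc.le with h1 | h1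
        · exact absurd h1 hgw
        · have hwg : b < g := h1.lt_of_ne (fun e => hgw e.ge)
          have he : g = a := by
            by_contra hne
            exact hc.2 hwg (hgu.lt_of_ne hne)
          rw [Walk.support_cons, he]
          exact List.mem_cons_self

lemma walk_between_mem (htree : ∀ v : V, IsChain (· ≤ ·) {u : V | u ≤ v})
    (hG : ∀ u v : V, G.Adj u v ↔ (u ⋖ v ∨ v ⋖ u)) : ∀ (n : ℕ) {u v : V} (p : G.Walk u v), p.length ≤ n →
    ∀ z : V, u ≤ z → z ≤ v → z ∈ p.support := by
  classical
  intro n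
  induction n with
  | zero =>
    intro u v p hp z h1 h2
    cases p with
    | nil => simp [le_antisymm h2 h1]
    | cons h q => simp [Walk.length_cons] at hp
  | succ n ih =>
    intro u v p hp z h1 h2
    cases p with
    | nil => simp [le_antisymm h2 h1]
    | cons h q =>
      rename_i b
      have hq : q.length ≤ n := by
        rw [Walk.length_cons] at hp
        omega
      by_cases hzu : z = u
      · rw [Walk.support_cons, hzu]
        exact List.mem_cons_self
      have h1' : u < z := h1.lt_of_ne (Ne.symm hzu)
      rcases (hG u b).1 h with hc | hc
      · -- u ⋖ b
        obtain ⟨g1, hg1⟩ := exists_glb htree b v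
        have hg1mem : g1 ∈ q.support := walk_glb_mem htree hG q g1 hg1
        rcases comp_below htree h2 (glb_le_right hg1) with hzg | hgz
        · have hzw : z ≤ b := hzg.trans (glb_le_left hg1)
          have he : z = b := by
            by_contra hne
            exact hc.2 h1' (hzw.lt_of_ne hne)
          rw [Walk.support_cons]
          exact List.mem_cons_of_mem _ (ih q hq z he.ge h2)
        · have hmem := ih (q.dropUntil g1 hg1mem)
            (le_trans (Walk.length_dropUntil_le q hg1mem) hq) z hgz h2
          rw [Walk.support_cons]
          exact List.mem_cons_of_mem _ (Walk.support_dropUntil_subset q hg1mem hmem)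
      · -- b ⋖ a
        rw [Walk.support_cons]
        exact List.mem_cons_of_mem _ (ih q hq z (hc.le.trans h1) h2)

lemma down_eq (htree : ∀ v : V, IsChain (· ≤ ·) {u : V | u ≤ v})
    (hG : ∀ u v : V, G.Adj u v ↔ (u ⋖ v ∨ v ⋖ u)) {M' : Set V} {g cv : V} (hgc : g ≤ cv) {m : V} (hm : m ∈ M')
    (hcov : m ⋖ cv) (p : G.Walk g cv) (hp : ∀ z ∈ p.support, z ∉ M') : cv = g := by
  rcases comp_below htree hgc hcov.le with h | h
  · exact absurd hm (hp m (walk_between_mem htree hG p.length p le_rfl m h hcov.le))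
  · rcases h.lt_or_eq with h' | h'
    · by_contra hne
      exact hcov.2 h' (hgc.lt_of_ne (Ne.symm hne))
    · exact absurd hm (h' ▸ hp g (Walk.start_mem_support p))

lemma up_half (htree : ∀ v : V, IsChain (· ≤ ·) {u : V | u ≤ v})
    (hG : ∀ u v : V, G.Adj u v ↔ (u ⋖ v ∨ v ⋖ u)) {M' : Set V} {m1 m2 l : V} (hm1 : m1 ∈ M') {c1 c2 : V}
    (hc2 : c2 ∉ M') (hcov1 : c1 ⋖ m1) (hcov2 : c2 ⋖ m2) (hl : IsGLB {m1, m2} l)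
    (hlm : l = m1) (p : G.Walk c1 c2) (hp : ∀ z ∈ p.support, z ∉ M') : m1 = m2 := by
  by_contra hne
  have h12 : m1 < m2 := (hlm ▸ glb_le_right hl).lt_of_ne hne
  rcases comp_below htree h12.le hcov2.le with h | h
  · exact absurd hm1 (hp m1 (walk_between_mem htree hG p.length p le_rfl m1 hcov1.le h))
  · rcases h.lt_or_eq with h' | h'
    · exact hcov2.2 h' h12
    · exact hc2 (h' ▸ hm1)

end Aux

/-- For a rooted tree `T` (modelled as a finite partial order in
which the set of ancestors of every vertex is a chain, with the root as bottom
element), if `M'` is the LCA-closure of `M` (the smallest superset of `M`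
closed under least common ancestors, i.e., greatest lower bounds, of pairs),
then `|M'| ≤ 2|M|` and every connected component `C` of `T − M'` has at most
two neighbors in `M'`, where the tree edges are the covering pairs of the
order. -/
theorem lca_closure_properties {V : Type*} [Fintype V] [PartialOrder V] [OrderBot V]
    (htree : ∀ v : V, IsChain (· ≤ ·) {u : V | u ≤ v})
    (M M' : Set V)
    (hsub : M ⊆ M')
    (hclosed : ∀ a ∈ M', ∀ b ∈ M', ∀ c : V, IsGLB {a, b} c → c ∈ M')
    (hmin : ∀ S : Set V, M ⊆ S →
      (∀ a ∈ S, ∀ b ∈ S, ∀ c : V, IsGLB {a, b} c → c ∈ S) → M' ⊆ S)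
    (G : SimpleGraph V) (hG : ∀ u v : V, G.Adj u v ↔ (u ⋖ v ∨ v ⋖ u)) :
    M'.ncard ≤ 2 * M.ncard ∧
      ∀ C : (G.induce M'ᶜ).ConnectedComponent,
        {m ∈ M' | ∃ c : (M'ᶜ : Set V),
          (G.induce M'ᶜ).connectedComponentMk c = C ∧ G.Adj m c}.ncard ≤ 2 := by
  classical
  constructor
  · obtain ⟨S, hMS, hScl, hScard⟩ := closure_card htree M
    exact le_trans (Set.ncard_le_ncard (hmin S hMS hScl) (Set.toFinite S)) hScard
  · intro C
    set N := {m ∈ M' | ∃ c : (M'ᶜ : Set V),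
        (G.induce M'ᶜ).connectedComponentMk c = C ∧ G.Adj m c} with hN
    set D : Set V := {m | m ∈ M' ∧ ∃ c : (M'ᶜ : Set V),
        (G.induce M'ᶜ).connectedComponentMk c = C ∧ m ⋖ (c : V)} with hD
    set U : Set V := {m | m ∈ M' ∧ ∃ c : (M'ᶜ : Set V),
        (G.induce M'ᶜ).connectedComponentMk c = C ∧ (c : V) ⋖ m} with hU
    -- walk infrastructure
    have mkwalk : ∀ (c1 c2 : (M'ᶜ : Set V)),
        (G.induce M'ᶜ).connectedComponentMk c1 = (G.induce M'ᶜ).connectedComponentMk c2 →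
        ∃ p : G.Walk (c1 : V) (c2 : V), ∀ z ∈ p.support, z ∉ M' := by
      intro c1 c2 hcc
      obtain ⟨p⟩ := ConnectedComponent.exact hcc
      refine ⟨p.map (Embedding.induce M'ᶜ).toHom, ?_⟩
      intro z hz
      replace hz : z ∈ p.support.map (Embedding.induce (G := G) M'ᶜ).toHom := by rw [← Walk.support_map]; exact hz
      obtain ⟨x, _, rfl⟩ := List.mem_map.1 hz
      exact x.2
    have hDsub : D.Subsingleton := by
      rintro m1 ⟨hm1, c1, hC1, hcov1⟩ m2 ⟨hm2, c2, hC2, hcov2⟩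
      obtain ⟨p, hp⟩ := mkwalk c1 c2 (hC1.trans hC2.symm)
      obtain ⟨g, hg⟩ := exists_glb htree (c1 : V) (c2 : V)
      have hgmem : g ∈ p.support := walk_glb_mem htree hG p g hg
      have he1 : (c1 : V) = g := by
        refine down_eq htree hG (glb_le_left hg) hm1 hcov1 ((p.takeUntil g hgmem).reverse) ?_
        intro z hz
        rw [Walk.support_reverse, List.mem_reverse] at hz
        exact hp z (Walk.support_takeUntil_subset p hgmem hz)
      have he2 : (c2 : V) = g := by
        refine down_eq htree hG (glb_le_right hg) hm2 hcov2 (p.dropUntil g hgmem) ?_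
        intro z hz
        exact hp z (Walk.support_dropUntil_subset p hgmem hz)
      rw [he1] at hcov1
      rw [he2] at hcov2
      exact uniq_parent htree hcov1 hcov2
    have hUsub : U.Subsingleton := by
      rintro m1 ⟨hm1, c1, hC1, hcov1⟩ m2 ⟨hm2, c2, hC2, hcov2⟩
      obtain ⟨p, hp⟩ := mkwalk c1 c2 (hC1.trans hC2.symm)
      obtain ⟨l, hl⟩ := exists_glb htree m1 m2
      have hlM : l ∈ M' := hclosed m1 hm1 m2 hm2 l hl
      obtain ⟨g, hg⟩ := exists_glb htree (c1 : V) (c2 : V)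
      have hgmem : g ∈ p.support := walk_glb_mem htree hG p g hg
      have hgM : g ∉ M' := hp g hgmem
      have hcase1 : l ≤ (c1 : V) ∨ l = m1 := by
        rcases comp_below htree (glb_le_left hl) hcov1.le with h | h
        · exact Or.inl h
        · rcases h.lt_or_eq with h' | h'
          · right
            by_contra hne
            exact hcov1.2 h' ((glb_le_left hl).lt_of_ne hne)
          · exact absurd (h' ▸ hlM) c1.2
      have hcase2 : l ≤ (c2 : V) ∨ l = m2 := by
        rcases comp_below htree (glb_le_right hl) hcov2.le with h | h
        · exact Or.inl h
        · rcases h.lt_or_eq with h' | h'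
          · right
            by_contra hne
            exact hcov2.2 h' ((glb_le_right hl).lt_of_ne hne)
          · exact absurd (h' ▸ hlM) c2.2
      rcases hcase1 with h1 | h1
      · rcases hcase2 with h2 | h2
        · exfalso
          have hlg : l ≤ g := le_glb hg h1 h2
          have hgl : g ≤ l := le_glb hl ((glb_le_left hg).trans hcov1.le)
            ((glb_le_right hg).trans hcov2.le)
          exact hgM ((le_antisymm hlg hgl) ▸ hlM)
        · exact (up_half htree hG hm2 c1.2 hcov2 hcov1
            (by rwa [Set.pair_comm] at hl) h2 p.reverse
            (by intro z hz; rw [Walk.support_reverse, List.mem_reverse] at hz; exact hp z hz)).symm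
      · exact up_half htree hG hm1 c2.2 hcov1 hcov2 hl h1 p hp
    have hNsub : N ⊆ D ∪ U := by
      rintro m ⟨hm, c, hC, hadj⟩
      rcases (hG m c).1 hadj with h | h
      · exact Or.inl ⟨hm, c, hC, h⟩
      · exact Or.inr ⟨hm, c, hC, h⟩
    calc N.ncard ≤ (D ∪ U).ncard := Set.ncard_le_ncard hNsub (Set.toFinite _)
      _ ≤ D.ncard + U.ncard := Set.ncard_union_le D U
      _ ≤ 1 + 1 := by
          gcongr
          · exact (Set.ncard_le_one (Set.toFinite _)).2 (fun a ha b hb => hDsub ha hb)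
          · exact (Set.ncard_le_one (Set.toFinite _)).2 (fun a ha b hb => hUsub ha hb)
      _ ≤ 2 := le_rfl
end

section
/- Let G be a graph, M a module of G with G[M] trivially perfect and containing an independent set of size at least 2k + 5, let I ⊆ M be an independent set of size 2k + 4, and let A = M \ I. If F is a minimum-size editing set for G − A with |F| ≤ k, then no vertex of I is incident to any pair of F. -/
lemma support_ncard_le_s18 {W : Type*} [Fintype W] (F : SimpleGraph W) :
    {v : W | ∃ y, F.Adj v y}.ncard ≤ 2 * F.edgeSet.ncard := by
  classical
  obtain h | h := isEmpty_or_nonempty W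
  · simp [Set.eq_empty_of_isEmpty]
  set T : Finset W := ({v : W | ∃ y, F.Adj v y} : Set W).toFinite.toFinset with hT
  set E : Finset (Sym2 W) := F.edgeSet.toFinite.toFinset with hE
  have hTcard : {v : W | ∃ y, F.Adj v y}.ncard = T.card := Set.ncard_eq_toFinset_card _ _
  have hEcard : F.edgeSet.ncard = E.card := Set.ncard_eq_toFinset_card _ _
  rw [hTcard, hEcard]
  set f : W → Sym2 W := fun v => s(v, Classical.epsilon (F.Adj v)) with hf
  have hmaps : ∀ v ∈ T, f v ∈ E := by
    intro v hv
    rw [hT, Set.Finite.mem_toFinset] at hv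
    have : F.Adj v (Classical.epsilon (F.Adj v)) := Classical.epsilon_spec hv
    rw [hE, Set.Finite.mem_toFinset]
    exact this
  refine Finset.card_le_mul_card_image_of_maps_to hmaps 2 ?_
  intro e he
  induction e with
  | h p q =>
    have hsub : T.filter (fun v => f v = s(p, q)) ⊆ {p, q} := by
      intro v hv
      rw [Finset.mem_filter] at hv
      have hv2 : v ∈ f v := Sym2.mem_mk_left _ _
      rw [hv.2] at hv2
      simpa using hv2
    calc (T.filter (fun v => f v = s(p, q))).card ≤ ({p, q} : Finset W).card :=
          Finset.card_le_card hsub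
      _ ≤ 2 := (Finset.card_insert_le _ _).trans (by simp)

/-- If `H'` agrees with `H` off a vertex `x`, and there is a large set `U` of vertices
each of which is an `H'`-false-twin of `x`, then trivial perfection transfers from
`H` to `H'`. -/
lemma tp_of_twin_replace {W : Type*} (H H' : SimpleGraph W) (U : Set W) (x : W)
    (hU4 : 4 ≤ U.ncard)
    (hzxU : ∀ z ∈ U, z ≠ x)
    (factA : ∀ u v : W, u ≠ x → v ≠ x → (H'.Adj u v ↔ H.Adj u v))
    (factC : ∀ z ∈ U, ∀ b : W, b ≠ z → b ≠ x → (H'.Adj z b ↔ H'.Adj x b))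
    (hH : TriviallyPerfect H) : TriviallyPerfect H' := by
  classical
  intro a b c d
  have hz : ∀ (s : Set W), x ∈ s → s.ncard ≤ 4 → s.Finite → ∃ z ∈ U, z ∉ s := by
    intro s hxs hs4 hsfin
    by_contra hcon
    push_neg at hcon
    have hUsub : U ⊆ s \ {x} := by
      intro z hzU
      exact ⟨hcon z hzU, fun h => hzxU z hzU (by simpa using h)⟩
    have h1 := Set.ncard_le_ncard hUsub hsfin.diff
    have hlt : (s \ {x}).ncard < s.ncard :=
      Set.ncard_diff_singleton_lt_of_mem hxs hsfin
    omega
  have hcard4 : ({a, b, c, d} : Set W).ncard ≤ 4 := by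
    calc ({a, b, c, d} : Set W).ncard ≤ ({b, c, d} : Set W).ncard + 1 :=
          Set.ncard_insert_le _ _
      _ ≤ (({c, d} : Set W).ncard + 1) + 1 := by
          have := Set.ncard_insert_le b ({c, d} : Set W); omega
      _ ≤ 4 := by
          have := Set.ncard_insert_le c ({d} : Set W)
          have := Set.ncard_singleton d
          omega
  -- main transfer machinery
  have key : ∀ hxmem : x ∈ ({a, b, c, d} : Set W), ∃ r : W → W,
      (∀ u v : W, u ∈ ({a, b, c, d} : Set W) → v ∈ ({a, b, c, d} : Set W) → u ≠ v →
        (H'.Adj (r u) (r v) ↔ H'.Adj u v)) ∧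
      (∀ u v : W, u ∈ ({a, b, c, d} : Set W) → v ∈ ({a, b, c, d} : Set W) → u ≠ v →
        r u ≠ r v) ∧
      (∀ v ∈ ({a, b, c, d} : Set W), r v ≠ x) := by
    intro hxmem
    obtain ⟨z, hzU, hznot⟩ := hz {a, b, c, d} hxmem hcard4 (Set.toFinite _)
    refine ⟨fun v => if v = x then z else v, ?_, ?_, ?_⟩
    · intro u v hu hv huv
      dsimp only
      by_cases hux : u = x
      · have hvx : v ≠ x := fun h => huv (hux.trans h.symm)
        have hvz : v ≠ z := fun h => hznot (h ▸ hv)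
        rw [if_pos hux, if_neg hvx, hux]
        exact factC z hzU v hvz hvx
      · by_cases hvx : v = x
        · have huz : u ≠ z := fun h => hznot (h ▸ hu)
          rw [if_pos hvx, if_neg hux, hvx, H'.adj_comm u z, H'.adj_comm u x]
          exact factC z hzU u huz hux
        · rw [if_neg hux, if_neg hvx]
    · intro u v hu hv huv
      dsimp only
      by_cases hux : u = x
      · have hvx : v ≠ x := fun h => huv (hux.trans h.symm)
        rw [if_pos hux, if_neg hvx]
        exact fun h => hznot (h ▸ hv)
      · by_cases hvx : v = x
        · rw [if_pos hvx, if_neg hux]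
          exact fun h => hznot (h.symm ▸ hu)
        · rw [if_neg hux, if_neg hvx]; exact huv
    · intro v hv
      dsimp only
      by_cases hvx : v = x
      · rw [if_pos hvx]
        exact hzxU z hzU
      · rw [if_neg hvx]; exact hvx
  have ha : a ∈ ({a, b, c, d} : Set W) := by simp
  have hb : b ∈ ({a, b, c, d} : Set W) := by simp
  have hc : c ∈ ({a, b, c, d} : Set W) := by simp
  have hd : d ∈ ({a, b, c, d} : Set W) := by simp
  constructor
  · intro hP4
    obtain ⟨h1, h2, h3, h4, h5, h6, n1, n2, n3, n4, n5, n6⟩ := hP4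
    by_cases hxmem : x ∈ ({a, b, c, d} : Set W)
    · obtain ⟨r, hradj, hrne, hrx⟩ := key hxmem
      exact (hH (r a) (r b) (r c) (r d)).1
        ⟨(factA _ _ (hrx a ha) (hrx b hb)).mp ((hradj a b ha hb n1).mpr h1),
         (factA _ _ (hrx b hb) (hrx c hc)).mp ((hradj b c hb hc n4).mpr h2),
         (factA _ _ (hrx c hc) (hrx d hd)).mp ((hradj c d hc hd n6).mpr h3),
         fun h => h4 ((hradj a c ha hc n2).mp ((factA _ _ (hrx a ha) (hrx c hc)).mpr h)),
         fun h => h5 ((hradj a d ha hd n3).mp ((factA _ _ (hrx a ha) (hrx d hd)).mpr h)),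
         fun h => h6 ((hradj b d hb hd n5).mp ((factA _ _ (hrx b hb) (hrx d hd)).mpr h)),
         hrne a b ha hb n1, hrne a c ha hc n2, hrne a d ha hd n3,
         hrne b c hb hc n4, hrne b d hb hd n5, hrne c d hc hd n6⟩
    · simp only [Set.mem_insert_iff, Set.mem_singleton_iff] at hxmem
      push_neg at hxmem
      obtain ⟨hax, hbx, hcx, hdx⟩ := hxmem
      exact (hH a b c d).1 ⟨(factA _ _ (Ne.symm hax) (Ne.symm hbx)).mp h1,
        (factA _ _ (Ne.symm hbx) (Ne.symm hcx)).mp h2,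
        (factA _ _ (Ne.symm hcx) (Ne.symm hdx)).mp h3,
        fun h => h4 ((factA _ _ (Ne.symm hax) (Ne.symm hcx)).mpr h),
        fun h => h5 ((factA _ _ (Ne.symm hax) (Ne.symm hdx)).mpr h),
        fun h => h6 ((factA _ _ (Ne.symm hbx) (Ne.symm hdx)).mpr h),
        n1, n2, n3, n4, n5, n6⟩
  · intro hC4
    obtain ⟨h1, h2, h3, h4, h5, h6, n1, n2, n3, n4, n5, n6⟩ := hC4
    by_cases hxmem : x ∈ ({a, b, c, d} : Set W)
    · obtain ⟨r, hradj, hrne, hrx⟩ := key hxmem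
      exact (hH (r a) (r b) (r c) (r d)).2
        ⟨(factA _ _ (hrx a ha) (hrx b hb)).mp ((hradj a b ha hb n1).mpr h1),
         (factA _ _ (hrx b hb) (hrx c hc)).mp ((hradj b c hb hc n4).mpr h2),
         (factA _ _ (hrx c hc) (hrx d hd)).mp ((hradj c d hc hd n6).mpr h3),
         (factA _ _ (hrx d hd) (hrx a ha)).mp ((hradj d a hd ha (Ne.symm n3)).mpr h4),
         fun h => h5 ((hradj a c ha hc n2).mp ((factA _ _ (hrx a ha) (hrx c hc)).mpr h)),
         fun h => h6 ((hradj b d hb hd n5).mp ((factA _ _ (hrx b hb) (hrx d hd)).mpr h)),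
         hrne a b ha hb n1, hrne a c ha hc n2, hrne a d ha hd n3,
         hrne b c hb hc n4, hrne b d hb hd n5, hrne c d hc hd n6⟩
    · simp only [Set.mem_insert_iff, Set.mem_singleton_iff] at hxmem
      push_neg at hxmem
      obtain ⟨hax, hbx, hcx, hdx⟩ := hxmem
      exact (hH a b c d).2 ⟨(factA _ _ (Ne.symm hax) (Ne.symm hbx)).mp h1,
        (factA _ _ (Ne.symm hbx) (Ne.symm hcx)).mp h2,
        (factA _ _ (Ne.symm hcx) (Ne.symm hdx)).mp h3,
        (factA _ _ (Ne.symm hdx) (Ne.symm hax)).mp h4,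
        fun h => h5 ((factA _ _ (Ne.symm hax) (Ne.symm hcx)).mpr h),
        fun h => h6 ((factA _ _ (Ne.symm hbx) (Ne.symm hdx)).mpr h),
        n1, n2, n3, n4, n5, n6⟩

/-- Let `M` be a module with `G[M]` trivially perfect and
containing an independent set of size at least `2k + 5`, let `I ⊆ M` be an
independent set of size `2k + 4`, and `A = M \ I`. If `F` is a minimum-size
editing set for `G − A` of size at most `k`, then no vertex of `I` is incident
to any pair of `F`. -/
theorem module_reduction_clean_indep {V : Type*} [Fintype V] [DecidableEq V]
    (G : SimpleGraph V) (k : ℕ) (M : Set V)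
    (hM : IsModule G M)
    (hMtp : TriviallyPerfect (G.induce M))
    (hbigIndep : ∃ S : Set V, S ⊆ M ∧ (∀ u ∈ S, ∀ v ∈ S, u ≠ v → ¬G.Adj u v) ∧
      2 * k + 5 ≤ S.ncard)
    (I : Set V) (hIM : I ⊆ M)
    (hIindep : ∀ u ∈ I, ∀ v ∈ I, u ≠ v → ¬G.Adj u v)
    (hIcard : I.ncard = 2 * k + 4)
    (F : SimpleGraph ((M \ I)ᶜ : Set V))
    (hFtp : TriviallyPerfect (symmDiff (G.induce ((M \ I)ᶜ : Set V)) F))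
    (hFmin : ∀ F' : SimpleGraph ((M \ I)ᶜ : Set V),
      TriviallyPerfect (symmDiff (G.induce ((M \ I)ᶜ : Set V)) F') →
      F.edgeSet.ncard ≤ F'.edgeSet.ncard)
    (hFk : F.edgeSet.ncard ≤ k) :
    ∀ x : ((M \ I)ᶜ : Set V), (x : V) ∈ I → ∀ y, ¬F.Adj x y := by
  classical
  intro x hxI y hxy
  -- the untouched twins
  have hUcard : 4 ≤ ({z : ((M \ I)ᶜ : Set V) | (z : V) ∈ I ∧ ∀ w, ¬F.Adj z w}).ncard := by
    have hI'card : (Subtype.val ⁻¹' I : Set ((M \ I)ᶜ : Set V)).ncard = 2 * k + 4 := by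
      have himg : Subtype.val '' (Subtype.val ⁻¹' I : Set ((M \ I)ᶜ : Set V)) = I := by
        rw [Set.image_preimage_eq_inter_range, Subtype.range_coe]
        apply Set.inter_eq_self_of_subset_left
        intro v hv
        simp [hv]
      have h2 := Set.ncard_image_of_injective (Subtype.val ⁻¹' I : Set ((M \ I)ᶜ : Set V))
        (Subtype.val_injective (p := fun v => v ∈ ((M \ I)ᶜ : Set V)))
      rw [himg] at h2
      rw [← h2, hIcard]
    have hsub : (Subtype.val ⁻¹' I : Set ((M \ I)ᶜ : Set V)) ⊆
        {z : ((M \ I)ᶜ : Set V) | (z : V) ∈ I ∧ ∀ w, ¬F.Adj z w} ∪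
        ((Subtype.val ⁻¹' I) ∩ {z : ((M \ I)ᶜ : Set V) | ∃ w, F.Adj z w}) := by
      intro v hv
      by_cases h : ∃ w, F.Adj v w
      · exact Or.inr ⟨hv, h⟩
      · exact Or.inl ⟨hv, fun w hw => h ⟨w, hw⟩⟩
    have h1 := (Set.ncard_le_ncard hsub (Set.toFinite _)).trans (Set.ncard_union_le _ _)
    have h2 : ((Subtype.val ⁻¹' I : Set ((M \ I)ᶜ : Set V)) ∩
        {z : ((M \ I)ᶜ : Set V) | ∃ w, F.Adj z w}).ncard ≤ 2 * k := by
      have h3 : ((Subtype.val ⁻¹' I : Set ((M \ I)ᶜ : Set V)) ∩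
          {z : ((M \ I)ᶜ : Set V) | ∃ w, F.Adj z w}).ncard ≤
          ({z : ((M \ I)ᶜ : Set V) | ∃ w, F.Adj z w}).ncard :=
        Set.ncard_le_ncard Set.inter_subset_right (Set.toFinite _)
      have h4 := support_ncard_le_s18 F
      omega
    rw [hI'card] at h1
    omega
  -- define the smaller editing set
  let F' : SimpleGraph ((M \ I)ᶜ : Set V) :=
    { Adj := fun a b => F.Adj a b ∧ a ≠ x ∧ b ≠ x
      symm := ⟨fun a b h => ⟨h.1.symm, h.2.2, h.2.1⟩⟩
      loopless := ⟨fun a h => F.loopless.irrefl a h.1⟩ }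
  have hF'adj : ∀ a b : ((M \ I)ᶜ : Set V), F'.Adj a b ↔ F.Adj a b ∧ a ≠ x ∧ b ≠ x :=
    fun a b => Iff.rfl
  have hedgelt : F'.edgeSet.ncard < F.edgeSet.ncard := by
    apply Set.ncard_lt_ncard _ (Set.toFinite _)
    constructor
    · intro e he
      induction e with
      | h p q =>
        rw [SimpleGraph.mem_edgeSet] at he ⊢
        exact he.1
    · intro hcon
      have h5 : s(x, y) ∈ F'.edgeSet := hcon (F.mem_edgeSet.mpr hxy)
      rw [SimpleGraph.mem_edgeSet, hF'adj] at h5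
      exact h5.2.1 rfl
  -- symmDiff adjacency
  have hsd : ∀ (K : SimpleGraph ((M \ I)ᶜ : Set V)) (u v : ((M \ I)ᶜ : Set V)),
      (symmDiff (G.induce ((M \ I)ᶜ : Set V)) K).Adj u v ↔
      ((G.Adj (u : V) (v : V) ∧ ¬K.Adj u v) ∨ (K.Adj u v ∧ ¬G.Adj (u : V) (v : V))) := by
    intro K u v
    rw [symmDiff_def]
    simp [SimpleGraph.sup_adj, SimpleGraph.sdiff_adj]
  have factA : ∀ u v : ((M \ I)ᶜ : Set V), u ≠ x → v ≠ x →
      ((symmDiff (G.induce ((M \ I)ᶜ : Set V)) F').Adj u v ↔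
       (symmDiff (G.induce ((M \ I)ᶜ : Set V)) F).Adj u v) := by
    intro u v hu hv
    rw [hsd, hsd, hF'adj]
    tauto
  have hzxU : ∀ z ∈ ({z : ((M \ I)ᶜ : Set V) | (z : V) ∈ I ∧ ∀ w, ¬F.Adj z w}),
      z ≠ x := by
    rintro z hz rfl
    exact hz.2 y hxy
  -- module twins
  have htwin : ∀ z : ((M \ I)ᶜ : Set V), (z : V) ∈ I → ∀ b : ((M \ I)ᶜ : Set V),
      b ≠ z → b ≠ x → (G.Adj (z : V) (b : V) ↔ G.Adj (x : V) (b : V)) := by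
    intro z hzI b hbz hbx
    have hbz' : (b : V) ≠ (z : V) := fun h => hbz (Subtype.ext h)
    have hbx' : (b : V) ≠ (x : V) := fun h => hbx (Subtype.ext h)
    by_cases hbM : (b : V) ∈ M
    · have hbI : (b : V) ∈ I := by
        have h6 := b.2
        simp only [Set.mem_compl_iff, Set.mem_diff] at h6
        tauto
      constructor
      · intro h; exact absurd h.symm (hIindep _ hbI _ hzI hbz')
      · intro h; exact absurd h.symm (hIindep _ hbI _ hxI hbx')
    · rcases hM (b : V) hbM with hall | hnone
      · constructor
        · intro _; exact (hall _ (hIM hxI)).symm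
        · intro _; exact (hall _ (hIM hzI)).symm
      · constructor
        · intro h; exact absurd h.symm (hnone _ (hIM hzI))
        · intro h; exact absurd h.symm (hnone _ (hIM hxI))
  have factC : ∀ z ∈ ({z : ((M \ I)ᶜ : Set V) | (z : V) ∈ I ∧ ∀ w, ¬F.Adj z w}),
      ∀ b : ((M \ I)ᶜ : Set V), b ≠ z → b ≠ x →
      ((symmDiff (G.induce ((M \ I)ᶜ : Set V)) F').Adj z b ↔
       (symmDiff (G.induce ((M \ I)ᶜ : Set V)) F').Adj x b) := by
    intro z hz b hbz hbx
    rw [hsd, hsd, hF'adj, hF'adj]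
    have h7 : ¬F.Adj z b := hz.2 b
    have h8 := htwin z hz.1 b hbz hbx
    have h9 := hzxU z hz
    tauto
  have hH'tp : TriviallyPerfect (symmDiff (G.induce ((M \ I)ᶜ : Set V)) F') :=
    tp_of_twin_replace _ _ _ x hUcard hzxU factA factC hFtp
  have := hFmin F' hH'tp
  omega
end

section
/- A connected trivially perfect graph on at least two vertices has at least one universal vertex; that is, if G is connected, has no induced P₄ or C₄, and |V(G)| ≥ 2, then there exists a vertex adjacent to all others. -/
/-- Any walk from inside a set to outside it crosses an edge of the boundary. -/
lemma walk_crossing {V : Type*} (G : SimpleGraph V) (S : Set V) :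
    ∀ {a b : V}, G.Walk a b → a ∈ S → b ∉ S →
      ∃ u x : V, u ∈ S ∧ x ∉ S ∧ G.Adj u x := by
  intro a b p
  induction p with
  | nil => intro h h'; exact absurd h h'
  | @cons a c b hac p ih =>
    intro ha hb
    by_cases hc : c ∈ S
    · exact ih hc hb
    · exact ⟨a, c, ha, hc, hac⟩

/-- A connected trivially perfect graph on at least two vertices
has a universal vertex. -/
theorem connected_triviallyPerfect_has_universal {V : Type*} [Fintype V]
    (G : SimpleGraph V) (hconn : G.Connected) (hTP : TriviallyPerfect G)
    (hcard : 2 ≤ Fintype.card V) :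
    ∃ v : V, ∀ w : V, w ≠ v → G.Adj v w := by
  classical
  letI : DecidableRel G.Adj := Classical.decRel _
  have hpos : 0 < Fintype.card V := by omega
  have : Nonempty V := Fintype.card_pos_iff.mp hpos
  have hne : (Finset.univ : Finset V).Nonempty := Finset.univ_nonempty
  obtain ⟨v, -, hmax⟩ := Finset.exists_max_image (Finset.univ : Finset V) (fun x => G.degree x) hne
  refine ⟨v, ?_⟩
  by_contra hbad
  push_neg at hbad
  obtain ⟨w0, hw0ne, hw0nadj⟩ := hbad
  -- find u adjacent to v and w adjacent to u with w not adjacent to v, w ≠ v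
  have hkey : ∃ u w : V, G.Adj v u ∧ G.Adj u w ∧ ¬ G.Adj v w ∧ w ≠ v := by
    obtain ⟨p⟩ := hconn v w0
    have hvS : v ∈ ({v} ∪ G.neighborSet v : Set V) := by simp
    have hw0S : w0 ∉ ({v} ∪ G.neighborSet v : Set V) := by
      simp only [Set.mem_union, Set.mem_singleton_iff, SimpleGraph.mem_neighborSet]
      tauto
    obtain ⟨u, w, huS, hwS, huw⟩ := walk_crossing G _ p hvS hw0S
    simp only [Set.mem_union, Set.mem_singleton_iff, SimpleGraph.mem_neighborSet,
      not_or] at huS hwS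
    rcases huS with rfl | huS
    · exact absurd huw.ne' (by tauto)
    · exact ⟨u, w, huS, huw, hwS.2, hwS.1⟩
  obtain ⟨u, w, hvu, huw, hvw, hwv⟩ := hkey
  -- every neighbor of v other than u is adjacent to u
  have hsub : ∀ x : V, G.Adj v x → x ≠ u → G.Adj u x := by
    intro x hvx hxu
    by_contra hux
    have hwx : w ≠ x := fun h => hvw (h ▸ hvx)
    have hwu : w ≠ u := fun h => hvw (by rw [h]; exact hvu)
    have hxv : x ≠ v := hvx.ne'
    have hwvne : w ≠ v := hwv
    have huv : u ≠ v := hvu.ne'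
    by_cases hwxadj : G.Adj w x
    · -- C4: w - u - v - x - w
      exact (hTP w u v x).2 ⟨huw.symm, hvu.symm, hvx,
        hwxadj.symm, fun h => hvw h.symm, hux,
        hwu, hwvne, hwx, huv, hxu.symm, hxv.symm⟩
    · -- P4: w - u - v - x
      exact (hTP w u v x).1 ⟨huw.symm, hvu.symm, hvx,
        fun h => hvw h.symm, hwxadj, hux,
        hwu, hwvne, hwx, huv, hxu.symm, hxv.symm⟩
  -- now degree u > degree v, contradiction
  have hdeg : G.degree v + 2 ≤ G.degree u + 1 := by
    have hsubset : G.neighborFinset v ∪ {v, w} ⊆ G.neighborFinset u ∪ {u} := by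
      intro x hx
      simp only [Finset.mem_union, SimpleGraph.mem_neighborFinset, Finset.mem_insert,
        Finset.mem_singleton] at hx ⊢
      rcases hx with hvx | rfl | rfl
      · by_cases hxu : x = u
        · exact Or.inr hxu
        · exact Or.inl (hsub x hvx hxu)
      · exact Or.inl hvu.symm
      · exact Or.inl huw
    have h1 : (G.neighborFinset v ∪ {v, w}).card = G.degree v + 2 := by
      rw [Finset.card_union_of_disjoint]
      · rw [Finset.card_insert_of_notMem (by simp [hwv.symm]), Finset.card_singleton,
          SimpleGraph.card_neighborFinset_eq_degree]
      · simp only [Finset.disjoint_insert_right, Finset.disjoint_singleton_right,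
          SimpleGraph.mem_neighborFinset]
        exact ⟨G.irrefl, fun h => hvw h⟩
    have h2 : (G.neighborFinset u ∪ {u}).card ≤ G.degree u + 1 := by
      calc (G.neighborFinset u ∪ {u}).card ≤ (G.neighborFinset u).card + ({u} : Finset V).card :=
        Finset.card_union_le _ _
      _ = G.degree u + 1 := by rw [SimpleGraph.card_neighborFinset_eq_degree, Finset.card_singleton]
    calc G.degree v + 2 = (G.neighborFinset v ∪ {v, w}).card := h1.symm
      _ ≤ (G.neighborFinset u ∪ {u}).card := Finset.card_le_card hsubset
      _ ≤ G.degree u + 1 := h2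
  have := hmax u (Finset.mem_univ u)
  omega
end
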